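/- arXiv:2008.07248 — 2 statements merged into one kernel-verified Lean document; each statement's English description precedes it below -/
import Mathlib

section
/- Let K ⊊ C be a C-asymptotic set, let r := dist(o, K), let w be a unit vector with −w ∈ int C°, and let ω be a nonempty compact subset of Ω_C. Then every x ∈ τ(K,ω) satisfies ⟨w,x⟩ ≤ r / sin Δ(ω). -/
open scoped RealInnerProductSpace ENNReal NNReal
open MeasureTheory Metric Set

noncomputable section

variable {d : ℕ}

/-- `C` is a pointed closed convex cone with apex at the origin and nonempty interior. -/
def IsPCCCone (C : Set (EuclideanSpace ℝ (Fin d))) : Prop :=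
  IsClosed C ∧ Convex ℝ C ∧ (∀ x ∈ C, ∀ t : ℝ, 0 ≤ t → t • x ∈ C) ∧
    (∀ x ∈ C, -x ∈ C → x = 0) ∧ (interior C).Nonempty

/-- The polar cone `C°`. -/
def polarCone (C : Set (EuclideanSpace ℝ (Fin d))) : Set (EuclideanSpace ℝ (Fin d)) :=
  {x | ∀ y ∈ C, ⟪x, y⟫ ≤ 0}

/-- `Ω_C = S^{d-1} ∩ int C°`. -/
def omegaC (C : Set (EuclideanSpace ℝ (Fin d))) : Set (EuclideanSpace ℝ (Fin d)) :=
  Metric.sphere 0 1 ∩ interior (polarCone C)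

/-- The reverse spherical image `τ(K, ω)`: the set of boundary points of `K` at which some
outer normal vector belongs to `ω`. -/
def revSphImage (K ω : Set (EuclideanSpace ℝ (Fin d))) : Set (EuclideanSpace ℝ (Fin d)) :=
  {x ∈ frontier K | ∃ u ∈ ω, ∀ y ∈ K, ⟪u, y⟫ ≤ ⟪u, x⟫}

/-- The surface area measure `S_{d-1}(K, ω) = H^{d-1}(τ(K,ω))`. -/
def surfMeas (K ω : Set (EuclideanSpace ℝ (Fin d))) : ℝ≥0∞ :=
  μH[(d : ℝ) - 1] (revSphImage K ω)

/-- `K` is a `C`-asymptotic set. -/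
def CAsymptotic (C K : Set (EuclideanSpace ℝ (Fin d))) : Prop :=
  K.Nonempty ∧ IsClosed K ∧ Convex ℝ K ∧ K ⊆ C ∧
    ∀ ε > 0, ∃ R : ℝ, ∀ x ∈ frontier C, R ≤ ‖x‖ → Metric.infDist x K < ε

/-- `K` is a `C`-close set. -/
def CClose (C K : Set (EuclideanSpace ℝ (Fin d))) : Prop :=
  K.Nonempty ∧ IsClosed K ∧ Convex ℝ K ∧ K ⊆ C ∧ volume (C \ K) < ⊤

/-- `K` is a `C`-full set. -/
def CFull (C K : Set (EuclideanSpace ℝ (Fin d))) : Prop :=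
  K.Nonempty ∧ IsClosed K ∧ Convex ℝ K ∧ K ⊆ C ∧ Bornology.IsBounded (C \ K)

/-- The support function `h(K, u)`. -/
def suppFn (K : Set (EuclideanSpace ℝ (Fin d))) (u : EuclideanSpace ℝ (Fin d)) : ℝ :=
  sSup ((fun y => ⟪u, y⟫) '' K)

/-- `A_ε` within `Ω`. -/
def thick (Ω A : Set (EuclideanSpace ℝ (Fin d))) (ε : ℝ) : Set (EuclideanSpace ℝ (Fin d)) :=
  {y ∈ Ω | ∃ x ∈ A, dist x y < ε}

/-- The Lévy–Prokhorov distance of two measures (set functions) on `Ω`. -/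
def lpDist (Ω : Set (EuclideanSpace ℝ (Fin d)))
    (μ ν : Set (EuclideanSpace ℝ (Fin d)) → ℝ≥0∞) : ℝ :=
  sInf {ε : ℝ | 0 < ε ∧ ∀ A ⊆ Ω, MeasurableSet A →
    μ A ≤ ν (thick Ω A ε) + ENNReal.ofReal ε ∧ ν A ≤ μ (thick Ω A ε) + ENNReal.ofReal ε}

/-- The boundary of `Ω_C` relative to the sphere. -/
def bdOmega (C : Set (EuclideanSpace ℝ (Fin d))) : Set (EuclideanSpace ℝ (Fin d)) :=
  closure (omegaC C) \ omegaC C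

/-- `Δ(ω)`: smallest angle between a vector of `ω` and a vector of `bd Ω_C`. -/
def sphDelta (C ω : Set (EuclideanSpace ℝ (Fin d))) : ℝ :=
  sInf {θ | ∃ u ∈ ω, ∃ v ∈ bdOmega C, θ = InnerProductGeometry.angle u v}

/-- The bounded-Lipschitz norm `‖f‖_BL = ‖f‖_L + ‖f‖_∞` of `f` on `ω`. -/
def normBL (ω : Set (EuclideanSpace ℝ (Fin d))) (f : EuclideanSpace ℝ (Fin d) → ℝ) : ℝ :=
  sSup {t | ∃ u ∈ ω, ∃ v ∈ ω, u ≠ v ∧ t = |f u - f v| / dist u v} +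
    sSup {t | ∃ u ∈ ω, t = |f u|}



section AuxLemmas
open scoped Topology
open Module Real Filter

lemma inner_neg_of_mem_int {C : Set (EuclideanSpace ℝ (Fin d))}
    {v x : EuclideanSpace ℝ (Fin d)} (hv : v ∈ interior (polarCone C))
    (hx : x ∈ C) (hx0 : x ≠ 0) : ⟪v, x⟫ < 0 := by
  obtain ⟨ε, hε, hball⟩ := Metric.isOpen_iff.1 isOpen_interior v hv
  have hxn : (0:ℝ) < ‖x‖ := norm_pos_iff.2 hx0
  have hmem : v + (ε / 2 / ‖x‖) • x ∈ polarCone C := by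
    apply interior_subset (hball ?_)
    rw [mem_ball, dist_eq_norm]
    rw [add_sub_cancel_left, norm_smul, Real.norm_eq_abs, abs_of_pos (by positivity)]
    rw [div_mul_cancel₀ _ hxn.ne']
    linarith
  have h2 := hmem x hx
  rw [inner_add_left, real_inner_smul_left, real_inner_self_eq_norm_sq] at h2
  have hp : (0:ℝ) < ε / 2 / ‖x‖ * ‖x‖ ^ 2 := by positivity
  linarith

lemma exists_unit_orthogonal (hd : 2 ≤ d) (u : EuclideanSpace ℝ (Fin d)) (hu : u ≠ 0) :
    ∃ q : EuclideanSpace ℝ (Fin d), ‖q‖ = 1 ∧ ⟪u, q⟫ = 0 := by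
  have h1 : finrank ℝ (ℝ ∙ u) = 1 := finrank_span_singleton hu
  have h2 := Submodule.finrank_add_finrank_orthogonal (K := (ℝ ∙ u))
  rw [h1, finrank_euclideanSpace_fin] at h2
  have hpos : 0 < finrank ℝ (ℝ ∙ u)ᗮ := by omega
  have : Nontrivial (ℝ ∙ u)ᗮ := Module.nontrivial_of_finrank_pos hpos
  obtain ⟨z, hz⟩ := exists_ne (0 : (ℝ ∙ u)ᗮ)
  have hz0 : (z : EuclideanSpace ℝ (Fin d)) ≠ 0 := by
    simpa [Submodule.coe_eq_zero] using hz
  refine ⟨‖(z : EuclideanSpace ℝ (Fin d))‖⁻¹ • z, norm_smul_inv_norm hz0, ?_⟩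
  rw [real_inner_smul_right]
  have := (Submodule.mem_orthogonal _ _).1 z.2 u (Submodule.mem_span_singleton_self u)
  rw [this, mul_zero]

set_option maxHeartbeats 1000000 in
lemma key_geom (hd : 2 ≤ d) {C ω : Set (EuclideanSpace ℝ (Fin d))}
    (hωsub : ω ⊆ omegaC C) {u x : EuclideanSpace ℝ (Fin d)} (hu : u ∈ ω)
    (hxC : x ∈ C) (hx0 : x ≠ 0) :
    sphDelta C ω ≤ π / 2 ∧ Real.sin (sphDelta C ω) * ‖x‖ ≤ -⟪u, x⟫ ∧
      (bdOmega C).Nonempty := by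
  obtain ⟨huS, huI⟩ := hωsub hu
  have hu1 : ‖u‖ = 1 := mem_sphere_zero_iff_norm.1 huS
  have hu0 : u ≠ 0 := by intro h; rw [h, norm_zero] at hu1; norm_num at hu1
  have hn : (0:ℝ) < ‖x‖ := norm_pos_iff.2 hx0
  set n : ℝ := ‖x‖ with hndef
  set p : EuclideanSpace ℝ (Fin d) := n⁻¹ • x with hpdef
  have hp1 : ‖p‖ = 1 := by
    rw [hpdef, norm_smul, Real.norm_eq_abs, abs_of_pos (by positivity)]
    exact inv_mul_cancel₀ hn.ne'
  have hxnp : x = n • p := by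
    rw [hpdef, smul_smul, mul_inv_cancel₀ hn.ne', one_smul]
  set s : ℝ := ⟪u, p⟫ with hsdef
  have hs' : ⟪u, p⟫ = s := rfl
  have hps : ⟪p, u⟫ = s := by rw [real_inner_comm]
  clear_value n
  clear hpdef
  clear_value p
  have hups : ⟪u, x⟫ = n * s := by rw [hxnp, real_inner_smul_right, hs']
  have hsneg : s < 0 := by
    have := inner_neg_of_mem_int huI hxC hx0
    rw [hups] at this; nlinarith
  clear_value s
  clear hsdef
  have hs_ge : -1 ≤ s := by
    have h := abs_real_inner_le_norm u p
    rw [hu1, hp1, one_mul, hs'] at h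
    linarith [(abs_le.1 h).1]
  have hs_le : s ≤ 1 := hsneg.le.trans zero_le_one
  set c : ℝ := Real.sqrt (1 - s ^ 2) with hcdef
  have hc0 : 0 ≤ c := Real.sqrt_nonneg _
  have hc2 : c ^ 2 = 1 - s ^ 2 := Real.sq_sqrt (by nlinarith)
  set θ : ℝ := Real.arccos s with hθdef
  have hθcos : Real.cos θ = s := Real.cos_arccos hs_ge hs_le
  have hθsin : Real.sin θ = c := by rw [hθdef, Real.sin_arccos, hcdef]
  have hθpi : θ ≤ π := Real.arccos_le_pi s
  have hθhalf : π / 2 ≤ θ := by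
    rw [hθdef, Real.arccos]
    have := Real.arcsin_nonpos.2 hsneg.le
    linarith
  clear_value c θ
  clear hθdef
  -- find q
  obtain ⟨q, hq1, hquq, hpd⟩ :
      ∃ q : EuclideanSpace ℝ (Fin d), ‖q‖ = 1 ∧ ⟪u, q⟫ = 0 ∧ p = s • u + c • q := by
    by_cases hs1 : s = -1
    · obtain ⟨q, hq1, hq2⟩ := exists_unit_orthogonal hd u hu0
      have hc00 : c = 0 := by rw [hcdef, hs1]; norm_num
      have hip : ⟪-u, p⟫ = 1 := by rw [inner_neg_left, hs', hs1]; norm_num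
      have hpu : -u = p :=
        (inner_eq_one_iff_of_norm_eq_one (by rw [norm_neg]; exact hu1) hp1).1 hip
      exact ⟨q, hq1, hq2, by rw [← hpu, hs1, hc00]; simp⟩
    · have hsgt : -1 < s := lt_of_le_of_ne hs_ge (Ne.symm hs1)
      have h1s : 0 < 1 - s ^ 2 := by nlinarith
      have hcpos : 0 < c := by rw [hcdef]; exact Real.sqrt_pos.2 h1s
      have hip : ⟪p - s • u, p - s • u⟫ = 1 - s ^ 2 := by
        simp only [inner_sub_left, inner_sub_right, real_inner_smul_left, real_inner_smul_right,
          hs', hps, real_inner_self_eq_norm_sq, hu1, hp1, norm_smul, Real.norm_eq_abs,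
          sq_abs, mul_one]
        ring
      have hnorm : ‖p - s • u‖ = c := by
        rw [norm_eq_sqrt_real_inner, hip, hcdef]
      refine ⟨c⁻¹ • (p - s • u), ?_, ?_, ?_⟩
      · rw [norm_smul, Real.norm_eq_abs, abs_of_pos (by positivity), hnorm,
          inv_mul_cancel₀ hcpos.ne']
      · simp only [real_inner_smul_right, inner_sub_right, hs',
          real_inner_self_eq_norm_sq, hu1]
        ring
      · rw [smul_smul, mul_inv_cancel₀ hcpos.ne', one_smul]; abel
  clear hcdef
  have hqu : ⟪q, u⟫ = 0 := by rw [real_inner_comm]; exact hquq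
  set γ : ℝ → EuclideanSpace ℝ (Fin d) := fun t => Real.cos t • u + Real.sin t • q with hγdef
  have hγu : ∀ t, ⟪u, γ t⟫ = Real.cos t := by
    intro t
    simp only [hγdef, inner_add_right, real_inner_smul_right, hquq,
      real_inner_self_eq_norm_sq, hu1]
    ring
  have hγp : ∀ t, ⟪γ t, p⟫ = Real.cos (θ - t) := by
    intro t
    rw [hpd]
    simp only [hγdef, inner_add_left, inner_add_right, real_inner_smul_left,
      real_inner_smul_right, hquq, hqu, real_inner_self_eq_norm_sq, hu1, hq1]
    rw [Real.cos_sub, hθcos, hθsin]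
    ring
  have hγx : ∀ t, ⟪γ t, x⟫ = n * Real.cos (θ - t) := by
    intro t; rw [hxnp, real_inner_smul_right, hγp]
  have hγnorm : ∀ t, ‖γ t‖ = 1 := by
    intro t
    have hip : ⟪γ t, γ t⟫ = 1 := by
      simp only [hγdef, inner_add_left, inner_add_right, real_inner_smul_left,
        real_inner_smul_right, hquq, hqu, real_inner_self_eq_norm_sq, hu1, hq1,
        norm_smul, Real.norm_eq_abs, sq_abs, mul_one]
      nlinarith [Real.sin_sq_add_cos_sq t]
    rw [norm_eq_sqrt_real_inner, hip, Real.sqrt_one]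
  have hγcont : Continuous γ := by
    rw [hγdef]
    exact (Real.continuous_cos.smul continuous_const).add
      (Real.continuous_sin.smul continuous_const)
  have hγ0 : γ 0 = u := by rw [hγdef]; simp
  clear_value γ
  clear hγdef
  set S : Set ℝ := {t | t ∈ Icc 0 (θ - π / 2) ∧ γ t ∉ interior (polarCone C)} with hSdef
  have hSclosed : IsClosed S := by
    have h : S = Icc 0 (θ - π / 2) ∩ γ ⁻¹' (interior (polarCone C))ᶜ := rfl
    rw [h]
    exact isClosed_Icc.inter (isOpen_interior.isClosed_compl.preimage hγcont)
  have hSmem : θ - π / 2 ∈ S := by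
    refine ⟨⟨by linarith, le_refl _⟩, fun hmem => ?_⟩
    have h1 := inner_neg_of_mem_int hmem hxC hx0
    have h2 := hγx (θ - π / 2)
    rw [sub_sub_cancel, Real.cos_pi_div_two, mul_zero] at h2
    rw [h2] at h1; exact lt_irrefl _ h1
  have hSne : S.Nonempty := ⟨_, hSmem⟩
  have hSbdd : BddBelow S := ⟨0, fun t ht => ht.1.1⟩
  set t₀ : ℝ := sInf S with ht₀def
  have ht₀S : t₀ ∈ S := hSclosed.csInf_mem hSne hSbdd
  have ht₀0 : 0 ≤ t₀ := ht₀S.1.1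
  have ht₀le : t₀ ≤ θ - π / 2 := ht₀S.1.2
  have ht₀pos : 0 < t₀ := by
    rcases ht₀0.lt_or_eq with h | h
    · exact h
    · exact absurd (h ▸ hγ0 ▸ huI) ht₀S.2
  have hmemΩ : ∀ t ∈ Ioo (0:ℝ) t₀, γ t ∈ omegaC C := by
    rintro t ⟨ht1, ht2⟩
    have htS : t ∉ S := fun h => absurd (csInf_le hSbdd h) (not_le.2 ht2)
    have hin : γ t ∈ interior (polarCone C) := by
      by_contra hcon
      exact htS ⟨⟨ht1.le, ht2.le.trans ht₀le⟩, hcon⟩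
    exact ⟨mem_sphere_zero_iff_norm.2 (hγnorm t), hin⟩
  have hvcl : γ t₀ ∈ closure (omegaC C) := by
    have hne : (𝓝[Ioo (0:ℝ) t₀] t₀).NeBot := by
      rw [← mem_closure_iff_nhdsWithin_neBot, closure_Ioo ht₀pos.ne]
      exact ⟨ht₀0, le_refl _⟩
    exact mem_closure_of_tendsto (hγcont.continuousWithinAt (s := Ioo 0 t₀))
      (eventually_mem_nhdsWithin.mono (fun t ht => hmemΩ t ht))
  have hvbd : γ t₀ ∈ bdOmega C := ⟨hvcl, fun h => ht₀S.2 h.2⟩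
  have hangle : InnerProductGeometry.angle u (γ t₀) = t₀ := by
    rw [InnerProductGeometry.angle, hγu, hu1, hγnorm, mul_one, div_one]
    exact Real.arccos_cos ht₀0 (by linarith)
  have hΔbdd : BddBelow {θ' | ∃ u' ∈ ω, ∃ v' ∈ bdOmega C,
      θ' = InnerProductGeometry.angle u' v'} := by
    refine ⟨0, ?_⟩
    rintro θ' ⟨u', _, v', _, rfl⟩
    exact InnerProductGeometry.angle_nonneg u' v'
  have hΔle : sphDelta C ω ≤ t₀ :=
    csInf_le hΔbdd ⟨u, hu, γ t₀, hvbd, hangle.symm⟩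
  have hΔ0 : 0 ≤ sphDelta C ω := by
    apply Real.sInf_nonneg
    rintro θ' ⟨u', _, v', _, rfl⟩
    exact InnerProductGeometry.angle_nonneg u' v'
  have hΔhalf : sphDelta C ω ≤ π / 2 := by linarith
  refine ⟨hΔhalf, ?_, ⟨_, hvbd⟩⟩
  have hsin : Real.sin (sphDelta C ω) ≤ Real.sin (θ - π / 2) := by
    rcases eq_or_lt_of_le (hΔle.trans ht₀le) with h | h
    · rw [h]
    · exact (Real.strictMonoOn_sin ⟨by linarith, hΔhalf⟩ ⟨by linarith, by linarith⟩ h).le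
  have hsin2 : Real.sin (θ - π / 2) = -s := by
    rw [show θ - π / 2 = -(π / 2 - θ) by ring, Real.sin_neg, Real.sin_pi_div_two_sub, hθcos]
  rw [hups]
  nlinarith [hsin.trans_eq hsin2]

set_option maxHeartbeats 1000000 in
lemma sphDelta_pos' {C ω : Set (EuclideanSpace ℝ (Fin d))} (hωne : ω.Nonempty)
    (hωcpt : IsCompact ω) (hωsub : ω ⊆ omegaC C) (hbd : (bdOmega C).Nonempty) :
    0 < sphDelta C ω := by
  have hsub1 : omegaC C ⊆ sphere 0 1 := fun z hz => hz.1
  have hclsub : closure (omegaC C) ⊆ sphere 0 1 :=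
    closure_minimal hsub1 isClosed_sphere
  have hbdsub : bdOmega C ⊆ closure (omegaC C) := fun z hz => hz.1
  have hbdclosed : IsClosed (bdOmega C) := by
    have hbdeq : bdOmega C = closure (omegaC C) ∩ (interior (polarCone C))ᶜ := by
      ext z
      constructor
      · rintro ⟨h1, h2⟩; exact ⟨h1, fun hi => h2 ⟨hclsub h1, hi⟩⟩
      · rintro ⟨h1, h2⟩; exact ⟨h1, fun hΩ => h2 hΩ.2⟩
    rw [hbdeq]
    exact isClosed_closure.inter isOpen_interior.isClosed_compl
  have hbdbounded : Bornology.IsBounded (bdOmega C) :=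
    (Metric.isBounded_sphere (x := (0 : EuclideanSpace ℝ (Fin d))) (r := 1)).subset
      (fun z hz => hclsub (hbdsub hz))
  have hbdcpt : IsCompact (bdOmega C) := Metric.isCompact_of_isClosed_isBounded
    hbdclosed hbdbounded
  have hKcpt : IsCompact (ω ×ˢ bdOmega C) := hωcpt.prod hbdcpt
  have hKne : (ω ×ˢ bdOmega C).Nonempty := hωne.prod hbd
  have hf : Continuous (fun pq : EuclideanSpace ℝ (Fin d) × EuclideanSpace ℝ (Fin d) =>
      Real.arccos ⟪pq.1, pq.2⟫) := Real.continuous_arccos.comp continuous_inner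
  obtain ⟨p₀, hp₀, hmin⟩ := hKcpt.exists_isMinOn hKne hf.continuousOn
  have hp₀1 : p₀.1 ∈ ω := (Set.mem_prod.1 hp₀).1
  have hp₀2 : p₀.2 ∈ bdOmega C := (Set.mem_prod.1 hp₀).2
  have hu1 : ‖p₀.1‖ = 1 := mem_sphere_zero_iff_norm.1 (hωsub hp₀1).1
  have hv1 : ‖p₀.2‖ = 1 := mem_sphere_zero_iff_norm.1 (hclsub (hbdsub hp₀2))
  have hlt : ⟪p₀.1, p₀.2⟫ < 1 := by
    rcases lt_or_eq_of_le (by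
      calc ⟪p₀.1, p₀.2⟫ ≤ ‖p₀.1‖ * ‖p₀.2‖ := real_inner_le_norm _ _
        _ = 1 := by rw [hu1, hv1, mul_one]) with h | h
    · exact h
    · exfalso
      have := (inner_eq_one_iff_of_norm_eq_one hu1 hv1).1 h
      exact hp₀2.2 (this ▸ hωsub hp₀1)
  have hpos : 0 < Real.arccos ⟪p₀.1, p₀.2⟫ := Real.arccos_pos.2 hlt
  refine hpos.trans_le (le_csInf ?_ ?_)
  · obtain ⟨u₁, hu₁⟩ := hωne
    obtain ⟨v₁, hv₁⟩ := hbd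
    exact ⟨_, u₁, hu₁, v₁, hv₁, rfl⟩
  · rintro b ⟨u', hu', v', hv', rfl⟩
    have h1 : ‖u'‖ = 1 := mem_sphere_zero_iff_norm.1 (hωsub hu').1
    have h2 : ‖v'‖ = 1 := mem_sphere_zero_iff_norm.1 (hclsub (hbdsub hv'))
    have : InnerProductGeometry.angle u' v' = Real.arccos ⟪u', v'⟫ := by
      unfold InnerProductGeometry.angle
      rw [h1, h2, mul_one, div_one]
    rw [this]
    exact isMinOn_iff.1 hmin (u', v') (Set.mk_mem_prod hu' hv')

end AuxLemmas

/-- **From the proof of Theorem 4.1.** For a `C`-asymptotic `K ⊊ C` with `r = dist(o,K)`,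
a unit vector `w` with `-w ∈ int C°`, and a nonempty compact `ω ⊆ Ω_C`,
every `x ∈ τ(K,ω)` satisfies `⟨w,x⟩ ≤ r / sin Δ(ω)`. -/
theorem revSphImage_height_bound (d : ℕ) (hd : 2 ≤ d)
    (C : Set (EuclideanSpace ℝ (Fin d))) (hC : IsPCCCone C)
    (K : Set (EuclideanSpace ℝ (Fin d))) (hK : CAsymptotic C K) (hKC : K ≠ C)
    (w : EuclideanSpace ℝ (Fin d)) (hw : ‖w‖ = 1) (hw' : -w ∈ interior (polarCone C))
    (ω : Set (EuclideanSpace ℝ (Fin d))) (hωne : ω.Nonempty) (hωcpt : IsCompact ω)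
    (hωsub : ω ⊆ omegaC C) :
    ∀ x ∈ revSphImage K ω, ⟪w, x⟫ ≤ Metric.infDist 0 K / Real.sin (sphDelta C ω) := by
  intro x hx
  obtain ⟨hxfr, u, huω, hmax⟩ := hx
  obtain ⟨hKne, hKcl, hKconv, hKsub, -⟩ := hK
  have hxK : x ∈ K := hKcl.frontier_subset hxfr
  have hxC : x ∈ C := hKsub hxK
  by_cases hx0 : x = 0
  · subst hx0
    rw [inner_zero_right, Metric.infDist_zero_of_mem hxK, zero_div]
  · obtain ⟨hΔhalf, hkey2, hbdne⟩ := key_geom hd hωsub huω hxC hx0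
    have hΔpos := sphDelta_pos' hωne hωcpt hωsub hbdne
    have hsinpos : 0 < Real.sin (sphDelta C ω) :=
      Real.sin_pos_of_pos_of_lt_pi hΔpos (by linarith [Real.pi_pos])
    obtain ⟨y₀, hy₀K, hy₀⟩ := hKcl.exists_infDist_eq_dist hKne 0
    have hy₀n : Metric.infDist 0 K = ‖y₀‖ := by rw [hy₀, dist_zero_left]
    have hu1 : ‖u‖ = 1 := mem_sphere_zero_iff_norm.1 (hωsub huω).1
    have h1 : -Metric.infDist 0 K ≤ ⟪u, x⟫ := by
      have h2 := abs_real_inner_le_norm u y₀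
      rw [hu1, one_mul] at h2
      have h3 := hmax y₀ hy₀K
      rw [hy₀n]
      linarith [(abs_le.1 h2).1]
    have h5 : ⟪w, x⟫ ≤ ‖x‖ := by
      have h := real_inner_le_norm w x
      rwa [hw, one_mul] at h
    have h6 : ‖x‖ ≤ Metric.infDist 0 K / Real.sin (sphDelta C ω) :=
      (le_div_iff₀ hsinpos).2 (by linarith)
    linarith
end
end

section
/- Let ω be a nonempty compact subset of Ω_C, let b > 0, and let K be a C-full set whose surface area measure is concentrated on ω with S_{d-1}(K,Ω_C) ≤ b. Then there is a constant c, depending only on C, ω and b, such that ‖x‖ ≤ c for every x ∈ bd K ∩ int C; in particular, every point x ∈ K at which h(K,u) = ⟨x,u⟩ for some u ∈ ω satisfies ‖x‖ ≤ c. -/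
open scoped RealInnerProductSpace ENNReal NNReal
open MeasureTheory Metric Set

noncomputable section

variable {d : ℕ}

section AuxProof

/-- A `(d-1)`-dimensional disk with unit normal `n`, center `c`, radius `ρ`. -/
private def eucDisk (n c : EuclideanSpace ℝ (Fin d)) (ρ : ℝ) : Set (EuclideanSpace ℝ (Fin d)) :=
  {y | ⟪n, y - c⟫ = 0 ∧ ‖y - c‖ ≤ ρ}

private lemma cball_hmeas_pos (m : ℕ) :
    0 < μH[(m : ℝ)] (Metric.closedBall (0 : EuclideanSpace ℝ (Fin m)) 1) := by
  have hlip : LipschitzWith 1 (⇑(WithLp.equiv 2 (Fin m → ℝ))) := PiLp.lipschitzWith_ofLp 2 _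
  have h1 := hlip.hausdorffMeasure_image_le (d := (m : ℝ)) (by positivity)
      (Metric.closedBall (0 : EuclideanSpace ℝ (Fin m)) 1)
  rw [ENNReal.coe_one, ENNReal.one_rpow, one_mul] at h1
  refine lt_of_lt_of_le ?_ h1
  have hpi : (μH[(m : ℝ)] : Measure (Fin m → ℝ)) = volume := by
    simpa using hausdorffMeasure_pi_real (ι := Fin m)
  rw [hpi]
  have himg : (⇑(WithLp.equiv 2 (Fin m → ℝ))) '' (Metric.closedBall 0 1) =
      (WithLp.equiv 2 (Fin m → ℝ)).symm ⁻¹' (Metric.closedBall 0 1) :=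
    Equiv.image_eq_preimage_symm _ _
  rw [himg]
  have hopen : IsOpen ((WithLp.equiv 2 (Fin m → ℝ)).symm ⁻¹' (Metric.ball 0 1)) := by
    exact Metric.isOpen_ball.preimage (PiLp.continuous_toLp 2 (fun _ : Fin m => ℝ))
  have hne : ((WithLp.equiv 2 (Fin m → ℝ)).symm ⁻¹' (Metric.ball 0 1)).Nonempty := by
    refine ⟨0, ?_⟩
    simp [Metric.mem_ball]
  refine lt_of_lt_of_le (hopen.measure_pos volume hne) (measure_mono ?_)
  exact Set.preimage_mono Metric.ball_subset_closedBall

/-- A dimensional constant: (essentially) the `H^{d-1}`-measure of a unit `(d-1)`-disk. -/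
private def diskKonst (d : ℕ) : ℝ≥0∞ :=
  min (μH[(d : ℝ) - 1] (Metric.closedBall (0 : EuclideanSpace ℝ (Fin (d - 1))) 1)) 1

private lemma diskKonst_pos (hd2 : 2 ≤ d) : 0 < diskKonst d := by
  have hcast : ((d - 1 : ℕ) : ℝ) = (d : ℝ) - 1 := by
    have : 1 ≤ d := by omega
    push_cast [Nat.cast_sub this]
    ring
  refine lt_min ?_ one_pos
  rw [← hcast]
  exact cball_hmeas_pos (d - 1)

private lemma diskKonst_le_one : diskKonst d ≤ 1 := min_le_right _ _

private lemma eucDisk_meas_ge (hd2 : 2 ≤ d) {n : EuclideanSpace ℝ (Fin d)} (hn : ‖n‖ = 1)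
    (c : EuclideanSpace ℝ (Fin d)) {ρ : ℝ} (hρ : 0 < ρ) :
    ENNReal.ofReal ρ ^ ((d : ℝ) - 1) * diskKonst d ≤ μH[(d : ℝ) - 1] (eucDisk n c ρ) := by
  have hm0 : (0 : ℝ) ≤ (d : ℝ) - 1 := by
    have : (2 : ℝ) ≤ (d : ℝ) := by exact_mod_cast hd2
    linarith
  haveI : Fact (Module.finrank ℝ (EuclideanSpace ℝ (Fin d)) = (d - 1) + 1) :=
    ⟨by rw [finrank_euclideanSpace_fin]; omega⟩
  have hn0 : n ≠ 0 := by
    intro h; rw [h, norm_zero] at hn; norm_num at hn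
  set V := (ℝ ∙ n)ᗮ with hV
  have hrank : Module.finrank ℝ V = d - 1 := Submodule.finrank_orthogonal_span_singleton hn0
  let B := (stdOrthonormalBasis ℝ V).reindex (finCongr (by rw [hrank]))
  let g : EuclideanSpace ℝ (Fin (d - 1)) ≃ₗᵢ[ℝ] V := B.repr.symm
  let f : EuclideanSpace ℝ (Fin (d - 1)) → EuclideanSpace ℝ (Fin d) :=
    fun y => c + ρ • ((g y : EuclideanSpace ℝ (Fin d)))
  have hdist : ∀ x y, dist (f x) (f y) = ρ * dist x y := by
    intro x y
    simp only [f, dist_eq_norm, add_sub_add_left_eq_sub, ← smul_sub, norm_smul,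
      Real.norm_of_nonneg hρ.le]
    congr 1
    rw [← Submodule.coe_sub, ← Submodule.coe_norm, ← map_sub, g.norm_map]
  have hanti : AntilipschitzWith (Real.toNNReal ρ⁻¹) f := by
    apply AntilipschitzWith.of_le_mul_dist
    intro x y
    rw [hdist, Real.coe_toNNReal _ (by positivity), ← mul_assoc,
      inv_mul_cancel₀ hρ.ne', one_mul]
  have himg : f '' Metric.closedBall 0 1 ⊆ eucDisk n c ρ := by
    rintro _ ⟨y, hy, rfl⟩
    constructor
    · show ⟪n, c + ρ • ((g y : EuclideanSpace ℝ (Fin d))) - c⟫ = 0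
      rw [add_sub_cancel_left, inner_smul_right]
      have hmem : ((g y : EuclideanSpace ℝ (Fin d))) ∈ (ℝ ∙ n)ᗮ := (g y).2
      have : ⟪n, ((g y : EuclideanSpace ℝ (Fin d)))⟫ = 0 := by
        rw [Submodule.mem_orthogonal] at hmem
        exact hmem n (Submodule.mem_span_singleton_self n)
      rw [this, mul_zero]
    · show ‖c + ρ • ((g y : EuclideanSpace ℝ (Fin d))) - c‖ ≤ ρ
      rw [add_sub_cancel_left, norm_smul, Real.norm_of_nonneg hρ.le]
      have h1 : ‖((g y : EuclideanSpace ℝ (Fin d)))‖ = ‖y‖ := by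
        rw [← Submodule.coe_norm, g.norm_map]
      rw [h1]
      have := mem_closedBall_zero_iff.1 hy
      nlinarith
  have hle := hanti.le_hausdorffMeasure_image hm0 (Metric.closedBall 0 1)
  have hmul : ENNReal.ofReal ρ * ENNReal.ofReal ρ⁻¹ = 1 := by
    rw [← ENNReal.ofReal_mul hρ.le, mul_inv_cancel₀ hρ.ne', ENNReal.ofReal_one]
  have hcoe : ((Real.toNNReal ρ⁻¹ : ℝ≥0) : ℝ≥0∞) = ENNReal.ofReal ρ⁻¹ := rfl
  calc ENNReal.ofReal ρ ^ ((d : ℝ) - 1) * diskKonst d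
      ≤ ENNReal.ofReal ρ ^ ((d : ℝ) - 1) *
        μH[(d : ℝ) - 1] (Metric.closedBall (0 : EuclideanSpace ℝ (Fin (d - 1))) 1) :=
        mul_le_mul_right (min_le_left _ _) _
    _ ≤ ENNReal.ofReal ρ ^ ((d : ℝ) - 1) *
        ((ENNReal.ofReal ρ⁻¹) ^ ((d : ℝ) - 1) * μH[(d : ℝ) - 1] (f '' Metric.closedBall 0 1)) := by
        refine mul_le_mul_right ?_ _
        rw [← hcoe]
        exact hle
    _ = (ENNReal.ofReal ρ * ENNReal.ofReal ρ⁻¹) ^ ((d : ℝ) - 1) *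
        μH[(d : ℝ) - 1] (f '' Metric.closedBall 0 1) := by
        rw [ENNReal.mul_rpow_of_nonneg _ _ hm0, mul_assoc]
    _ = μH[(d : ℝ) - 1] (f '' Metric.closedBall 0 1) := by
        rw [hmul, ENNReal.one_rpow, one_mul]
    _ ≤ μH[(d : ℝ) - 1] (eucDisk n c ρ) := measure_mono himg

private lemma cone_add_mem {C : Set (EuclideanSpace ℝ (Fin d))} (hC : IsPCCCone C)
    {x y : EuclideanSpace ℝ (Fin d)} (hx : x ∈ C) (hy : y ∈ C) : x + y ∈ C := by
  have h := hC.2.1 hx hy (by norm_num : (0:ℝ) ≤ 1/2) (by norm_num : (0:ℝ) ≤ 1/2) (by norm_num)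
  have h2 := hC.2.2.1 _ h 2 (by norm_num)
  have heq : (2:ℝ) • ((1/2 : ℝ) • x + (1/2 : ℝ) • y) = x + y := by
    rw [smul_add, smul_smul, smul_smul]; norm_num
  rwa [heq] at h2

private lemma cone_add_interior {C : Set (EuclideanSpace ℝ (Fin d))} (hC : IsPCCCone C)
    {x y : EuclideanSpace ℝ (Fin d)} (hx : x ∈ C) (hy : y ∈ interior C) :
    x + y ∈ interior C := by
  have hopen : IsOpen ((fun z => x + z) '' interior C) :=
    (isOpenMap_add_left x) _ isOpen_interior
  have hsub : (fun z => x + z) '' interior C ⊆ C := by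
    rintro _ ⟨z, hz, rfl⟩
    exact cone_add_mem hC hx (interior_subset hz)
  exact interior_maximal hsub hopen ⟨y, hy, rfl⟩

open scoped Pointwise in
private lemma cone_smul_interior {C : Set (EuclideanSpace ℝ (Fin d))} (hC : IsPCCCone C)
    {x : EuclideanSpace ℝ (Fin d)} {t : ℝ} (ht : 0 < t) (hx : x ∈ interior C) :
    t • x ∈ interior C := by
  have hopen : IsOpen (t • interior C) := isOpen_interior.smul₀ ht.ne'
  have hsub : t • interior C ⊆ C := by
    rintro _ ⟨z, hz, rfl⟩
    exact hC.2.2.1 _ (interior_subset hz) t ht.le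
  exact interior_maximal hsub hopen (Set.smul_mem_smul_set hx)

private lemma exists_unit_interior (hd2 : 2 ≤ d) {C : Set (EuclideanSpace ℝ (Fin d))}
    (hC : IsPCCCone C) :
    ∃ e : EuclideanSpace ℝ (Fin d), ‖e‖ = 1 ∧ e ∈ interior C := by
  obtain ⟨e0, he0⟩ := hC.2.2.2.2
  have he0ne : e0 ≠ 0 := by
    intro h
    subst h
    obtain ⟨ε, hε, hball⟩ := Metric.isOpen_iff.1 isOpen_interior 0 he0
    set v : EuclideanSpace ℝ (Fin d) := EuclideanSpace.single (⟨0, by omega⟩ : Fin d) (ε/2)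
      with hv
    have hvn : ‖v‖ = ε / 2 := by
      rw [hv, EuclideanSpace.norm_single]
      rw [Real.norm_of_nonneg (by positivity)]
    have hvC : v ∈ C := interior_subset (hball (by
      rw [Metric.mem_ball, dist_zero_right, hvn]; linarith))
    have hvC' : -v ∈ C := interior_subset (hball (by
      rw [Metric.mem_ball, dist_zero_right, norm_neg, hvn]; linarith))
    have := hC.2.2.2.1 v hvC hvC'
    rw [this, norm_zero] at hvn
    linarith
  refine ⟨‖e0‖⁻¹ • e0, ?_, cone_smul_interior hC (inv_pos.2 (norm_pos_iff.2 he0ne)) he0⟩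
  rw [norm_smul, norm_inv, norm_norm, inv_mul_cancel₀ (norm_ne_zero_iff.2 he0ne)]

private lemma inner_lt_zero_of_interior_polar {C : Set (EuclideanSpace ℝ (Fin d))}
    {u w : EuclideanSpace ℝ (Fin d)} (hu : u ∈ interior (polarCone C))
    (hw : w ∈ C) (hw0 : w ≠ 0) : ⟪u, w⟫ < 0 := by
  have hle : ⟪u, w⟫ ≤ 0 := interior_subset hu w hw
  rcases hle.lt_or_eq with h | h
  · exact h
  exfalso
  obtain ⟨ε, hε, hball⟩ := Metric.isOpen_iff.1 isOpen_interior u hu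
  have hwn : (0:ℝ) < ‖w‖ := norm_pos_iff.2 hw0
  set c : ℝ := ε / (2 * ‖w‖) with hc
  have hcpos : 0 < c := by positivity
  have hu' : u + c • w ∈ polarCone C := interior_subset (hball (by
    rw [Metric.mem_ball, dist_eq_norm, add_sub_cancel_left, norm_smul,
      Real.norm_of_nonneg hcpos.le, hc, div_mul_eq_mul_div, div_lt_iff₀ (by positivity)]
    nlinarith))
  have h2 := hu' w hw
  rw [inner_add_left, real_inner_smul_left, h] at h2
  have h3 : (0:ℝ) < c * ⟪w, w⟫ := by
    rw [real_inner_self_eq_norm_mul_norm]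
    exact mul_pos hcpos (mul_pos hwn hwn)
  linarith

private lemma exists_delta {C ω : Set (EuclideanSpace ℝ (Fin d))} (hC : IsPCCCone C)
    (hωne : ω.Nonempty) (hωcpt : IsCompact ω) (hωsub : ω ⊆ omegaC C)
    {e : EuclideanSpace ℝ (Fin d)} (he : ‖e‖ = 1) (heC : e ∈ C) :
    ∃ δ : ℝ, 0 < δ ∧ δ ≤ 1 ∧ ∀ u ∈ ω, ∀ w ∈ C, ⟪u, w⟫ ≤ -δ * ‖w‖ := by
  have hCS : (C ∩ Metric.sphere 0 1).Nonempty :=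
    ⟨e, heC, by rwa [Metric.mem_sphere, dist_zero_right]⟩
  have hcpt2 : IsCompact (ω ×ˢ (C ∩ Metric.sphere 0 1)) :=
    hωcpt.prod ((isCompact_sphere 0 1).inter_left hC.1)
  have hcont : ContinuousOn
      (fun p : EuclideanSpace ℝ (Fin d) × EuclideanSpace ℝ (Fin d) => ⟪p.1, p.2⟫)
      (ω ×ˢ (C ∩ Metric.sphere 0 1)) :=
    continuous_inner.continuousOn
  obtain ⟨⟨u0, w0⟩, hmem, hmax'⟩ :=
    hcpt2.exists_isMaxOn (hωne.prod hCS) hcont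
  have hw0C : w0 ∈ C := hmem.2.1
  have hw0n : ‖w0‖ = 1 := by
    have := hmem.2.2; rwa [Metric.mem_sphere, dist_zero_right] at this
  have hw00 : w0 ≠ 0 := by
    intro h; rw [h, norm_zero] at hw0n; norm_num at hw0n
  have hneg : ⟪u0, w0⟫ < 0 :=
    inner_lt_zero_of_interior_polar (hωsub hmem.1).2 hw0C hw00
  set δ : ℝ := min (-⟪u0, w0⟫) 1 with hδ
  have hδpos : 0 < δ := lt_min (by linarith) one_pos
  refine ⟨δ, hδpos, min_le_right _ _, ?_⟩
  intro u hu w hw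
  rcases eq_or_ne w 0 with rfl | hwne
  · simp
  have hwn : (0:ℝ) < ‖w‖ := norm_pos_iff.2 hwne
  have hw1 : ‖w‖⁻¹ • w ∈ C ∩ Metric.sphere 0 1 := by
    refine ⟨hC.2.2.1 w hw _ (by positivity), ?_⟩
    rw [Metric.mem_sphere, dist_zero_right, norm_smul, norm_inv, norm_norm,
      inv_mul_cancel₀ hwn.ne']
  have hle : ⟪u, ‖w‖⁻¹ • w⟫ ≤ ⟪u0, w0⟫ := hmax' (Set.mk_mem_prod hu hw1)
  have h1 : ⟪u, ‖w‖⁻¹ • w⟫ ≤ -δ := by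
    have : ⟪u0, w0⟫ ≤ -δ := by
      rw [hδ]
      rcases le_total (-⟪u0, w0⟫) 1 with h | h
      · rw [min_eq_left h]; linarith
      · rw [min_eq_right h]; linarith
    linarith
  rw [real_inner_smul_right] at h1
  have h2 : ‖w‖ * (‖w‖⁻¹ * ⟪u, w⟫) ≤ ‖w‖ * (-δ) :=
    mul_le_mul_of_nonneg_left h1 hwn.le
  rw [← mul_assoc, mul_inv_cancel₀ hwn.ne', one_mul] at h2
  linarith

private lemma first_entry {K : Set (EuclideanSpace ℝ (Fin d))} (hK : IsClosed K)
    {z w : EuclideanSpace ℝ (Fin d)} (hz : z ∉ K) (hw : w ∈ K) :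
    ∃ θ : ℝ, 0 < θ ∧ θ ≤ 1 ∧ z + θ • (w - z) ∈ frontier K ∧
      ∀ s : ℝ, 0 ≤ s → s < θ → z + s • (w - z) ∉ K := by
  set J := {s : ℝ | 0 ≤ s ∧ z + s • (w - z) ∈ K} with hJ
  have hJ1 : (1:ℝ) ∈ J := ⟨zero_le_one, by simpa using hw⟩
  have hJclosed : IsClosed J := by
    have : J = Set.Ici 0 ∩ ((fun s : ℝ => z + s • (w - z)) ⁻¹' K) := by
      ext s; simp [hJ, Set.mem_Ici]
    rw [this]
    exact isClosed_Ici.inter (hK.preimage (by fun_prop))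
  have hbdd : BddBelow J := ⟨0, fun s hs => hs.1⟩
  set θ := sInf J with hθ
  have hθJ : θ ∈ J := hJclosed.csInf_mem ⟨1, hJ1⟩ hbdd
  have hθpos : 0 < θ := by
    rcases hθJ.1.lt_or_eq with h | h
    · exact h
    · exfalso; apply hz
      have h2 := hθJ.2; rw [← h] at h2; simpa using h2
  have hθle1 : θ ≤ 1 := csInf_le hbdd hJ1
  have hnot : ∀ s : ℝ, 0 ≤ s → s < θ → z + s • (w - z) ∉ K := by
    intro s hs0 hsθ hsK
    exact absurd (csInf_le hbdd ⟨hs0, hsK⟩) (not_le.2 hsθ)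
  refine ⟨θ, hθpos, hθle1, ?_, hnot⟩
  rw [hK.frontier_eq]
  refine ⟨hθJ.2, ?_⟩
  intro hint
  obtain ⟨ε, hε, hball⟩ := Metric.isOpen_iff.1 isOpen_interior _ hint
  have hwz : (0:ℝ) < ‖w - z‖ := by
    rw [norm_pos_iff, sub_ne_zero]
    intro h; exact hz (h ▸ hw)
  set s : ℝ := max 0 (θ - ε / (2 * ‖w - z‖)) with hs
  have hs0 : 0 ≤ s := le_max_left _ _
  have hsθ : s < θ := by
    rw [hs, max_lt_iff]
    constructor
    · exact hθpos
    · have : 0 < ε / (2 * ‖w - z‖) := by positivity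
      linarith
  have hd1 : θ - s ≤ ε / (2 * ‖w - z‖) := by
    rw [hs]
    rcases le_total 0 (θ - ε / (2 * ‖w - z‖)) with h | h
    · rw [max_eq_right h]; linarith
    · rw [max_eq_left h]
      have : 0 < ε / (2 * ‖w - z‖) := by positivity
      linarith
  have hmem : z + s • (w - z) ∈ K := by
    apply interior_subset
    apply hball
    rw [Metric.mem_ball, dist_eq_norm]
    have : z + s • (w - z) - (z + θ • (w - z)) = (s - θ) • (w - z) := by
      rw [add_sub_add_left_eq_sub, ← sub_smul]
    rw [this, norm_smul, Real.norm_of_nonpos (by linarith), neg_sub]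
    calc (θ - s) * ‖w - z‖ ≤ ε / (2 * ‖w - z‖) * ‖w - z‖ :=
          mul_le_mul_of_nonneg_right hd1 hwz.le
      _ = ε / 2 := by field_simp
      _ < ε := by linarith
  exact hnot s hs0 hsθ hmem

private lemma far_mem_K {C K : Set (EuclideanSpace ℝ (Fin d))} {R : ℝ}
    (hRK : C \ K ⊆ Metric.closedBall 0 R) {w : EuclideanSpace ℝ (Fin d)}
    (hw : w ∈ C) (hfar : R < ‖w‖) : w ∈ K := by
  by_contra hwK
  have := hRK ⟨hw, hwK⟩
  rw [Metric.mem_closedBall, dist_zero_right] at this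
  linarith

/-- A `C`-full set contains a closed ball. -/
private lemma cfull_interior_ball (hd2 : 2 ≤ d) {C K : Set (EuclideanSpace ℝ (Fin d))}
    (hC : IsPCCCone C) (hK : CFull C K) :
    ∃ (y0 : EuclideanSpace ℝ (Fin d)) (r : ℝ), 0 < r ∧ Metric.closedBall y0 r ⊆ K := by
  obtain ⟨R0, hR0⟩ := hK.2.2.2.2.subset_closedBall 0
  set R := max R0 0 with hR
  have hRK : C \ K ⊆ Metric.closedBall 0 R :=
    hR0.trans (Metric.closedBall_subset_closedBall (le_max_left _ _))
  have hRpos : 0 ≤ R := le_max_right _ _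
  obtain ⟨e, he, heC⟩ := exists_unit_interior hd2 hC
  obtain ⟨ε, hε, hball⟩ := Metric.isOpen_iff.1 isOpen_interior e heC
  set r0 : ℝ := min (ε / 2) (1 / 2) with hr0
  have hr0pos : 0 < r0 := lt_min (by linarith) (by norm_num)
  have hr0half : r0 ≤ 1 / 2 := min_le_right _ _
  have hcb : Metric.closedBall e r0 ⊆ C := by
    intro w hw
    apply interior_subset (hball _)
    rw [Metric.mem_closedBall] at hw
    rw [Metric.mem_ball]
    have : r0 ≤ ε / 2 := min_le_left _ _
    linarith
  set M : ℝ := 2 * (R + 1) with hM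
  have hMpos : 0 < M := by positivity
  refine ⟨M • e, M * r0 / 2, by positivity, ?_⟩
  intro w hw
  rw [Metric.mem_closedBall, dist_eq_norm] at hw
  have hwC : w ∈ C := by
    have h1 : M⁻¹ • w ∈ Metric.closedBall e r0 := by
      rw [Metric.mem_closedBall, dist_eq_norm]
      have : M⁻¹ • w - e = M⁻¹ • (w - M • e) := by
        rw [smul_sub, smul_smul, inv_mul_cancel₀ hMpos.ne', one_smul]
      rw [this, norm_smul, norm_inv, Real.norm_of_nonneg hMpos.le]
      rw [inv_mul_le_iff₀ hMpos]
      nlinarith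
    have h2 := hcb h1
    have : w = M • (M⁻¹ • w) := by
      rw [smul_smul, mul_inv_cancel₀ hMpos.ne', one_smul]
    rw [this]
    exact hC.2.2.1 _ h2 M hMpos.le
  refine far_mem_K hRK hwC ?_
  have h3 : ‖M • e‖ = M := by
    rw [norm_smul, Real.norm_of_nonneg hMpos.le, he, mul_one]
  have h4 : M - ‖w - M • e‖ ≤ ‖w‖ := by
    have h5 : ‖w - (w - M • e)‖ ≤ ‖w‖ + ‖w - M • e‖ := norm_sub_le _ _
    rw [sub_sub_cancel] at h5
    rw [h3] at h5
    linarith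
  have : M * r0 / 2 ≤ M / 4 := by nlinarith
  nlinarith

/-- Supporting hyperplane at a frontier point of a closed convex set with interior. -/
private lemma support_at_frontier {K : Set (EuclideanSpace ℝ (Fin d))}
    (hKcl : IsClosed K) (hKcv : Convex ℝ K) {y0 : EuclideanSpace ℝ (Fin d)}
    (hint : y0 ∈ interior K) {p : EuclideanSpace ℝ (Fin d)} (hpf : p ∈ frontier K) :
    ∃ n : EuclideanSpace ℝ (Fin d), ‖n‖ = 1 ∧ (∀ y ∈ K, ⟪n, y⟫ ≤ ⟪n, p⟫) := by
  have hpni : p ∉ interior K := hpf.2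
  obtain ⟨f, hf⟩ := geometric_hahn_banach_open_point hKcv.interior isOpen_interior hpni
  set n' : EuclideanSpace ℝ (Fin d) := (InnerProductSpace.toDual ℝ _).symm f with hn'
  have hn'app : ∀ y, ⟪n', y⟫ = f y := fun y => InnerProductSpace.toDual_symm_apply
  have hKle : ∀ y ∈ K, ⟪n', y⟫ ≤ ⟪n', p⟫ := by
    intro y hy
    rw [hn'app, hn'app]
    have hcont : Continuous (fun t : ℝ => f ((1 - t) • y + t • y0)) := by fun_prop
    have htend : Filter.Tendsto (fun t : ℝ => f ((1 - t) • y + t • y0))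
        (nhdsWithin 0 (Set.Ioi 0)) (nhds (f y)) := by
      have h0 : f ((1 - (0:ℝ)) • y + (0:ℝ) • y0) = f y := by norm_num
      exact h0 ▸ (hcont.tendsto 0).mono_left nhdsWithin_le_nhds
    refine le_of_tendsto htend ?_
    filter_upwards [Ioo_mem_nhdsGT_of_mem
      (Set.mem_Ico.2 ⟨le_refl (0:ℝ), zero_lt_one⟩)] with t ht
    have hmem : (1 - t) • y + t • y0 ∈ interior K :=
      hKcv.combo_closure_interior_mem_interior (subset_closure hy) hint
        (by linarith [ht.2]) ht.1 (by ring)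
    exact (hf _ hmem).le
  have hfy0 : f y0 < f p := hf _ hint
  have hn'0 : n' ≠ 0 := by
    intro h
    have h1 := hn'app y0
    have h2 := hn'app p
    rw [h] at h1 h2
    simp only [inner_zero_left] at h1 h2
    rw [← h1, ← h2] at hfy0
    exact lt_irrefl _ hfy0
  have hn'norm : 0 < ‖n'‖ := norm_pos_iff.2 hn'0
  refine ⟨‖n'‖⁻¹ • n', ?_, ?_⟩
  · rw [norm_smul, norm_inv, norm_norm, inv_mul_cancel₀ hn'norm.ne']
  · intro y hy
    rw [real_inner_smul_left, real_inner_smul_left]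
    exact mul_le_mul_of_nonneg_left (hKle y hy) (by positivity)

/-- Every frontier point of a `C`-full set lying in `interior C` admits an outer unit normal
belonging to `Ω_C`. -/
private lemma normal_in_omegaC (hd2 : 2 ≤ d) {C K : Set (EuclideanSpace ℝ (Fin d))}
    (hC : IsPCCCone C) (hK : CFull C K)
    {p : EuclideanSpace ℝ (Fin d)} (hpf : p ∈ frontier K) (hpi : p ∈ interior C) :
    ∃ n, n ∈ omegaC C ∧ ∀ y ∈ K, ⟪n, y⟫ ≤ ⟪n, p⟫ := by
  obtain ⟨R0, hR0⟩ := hK.2.2.2.2.subset_closedBall 0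
  set R := max R0 0 with hR
  have hRK : C \ K ⊆ Metric.closedBall 0 R :=
    hR0.trans (Metric.closedBall_subset_closedBall (le_max_left _ _))
  have hRpos : 0 ≤ R := le_max_right _ _
  obtain ⟨e, he, heC⟩ := exists_unit_interior hd2 hC
  obtain ⟨y0, r, hrpos, hcbK⟩ := cfull_interior_ball hd2 hC hK
  have hint : y0 ∈ interior K :=
    interior_maximal (Metric.ball_subset_closedBall.trans hcbK) Metric.isOpen_ball
      (Metric.mem_ball_self hrpos)
  obtain ⟨n, hnnorm, hnK⟩ := support_at_frontier hK.2.1 hK.2.2.1 hint hpf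
  have hy0K : y0 ∈ K := interior_subset hint
  have hy0C : y0 ∈ C := hK.2.2.2.1 hy0K
  have hpolar : ∀ w ∈ C, ⟪n, w⟫ ≤ 0 := by
    intro w hw
    by_contra hpos
    push_neg at hpos
    have hw0 : w ≠ 0 := by
      rintro rfl; rw [inner_zero_right] at hpos; exact lt_irrefl _ hpos
    have hwn : 0 < ‖w‖ := norm_pos_iff.2 hw0
    set lam : ℝ := max ((R + ‖y0‖ + 1) / ‖w‖) ((⟪n, p⟫ - ⟪n, y0⟫ + 1) / ⟪n, w⟫) with hlam
    have hlam1 : (R + ‖y0‖ + 1) / ‖w‖ ≤ lam := le_max_left _ _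
    have hlam2 : (⟪n, p⟫ - ⟪n, y0⟫ + 1) / ⟪n, w⟫ ≤ lam := le_max_right _ _
    have hlampos : 0 ≤ lam := le_trans (by positivity) hlam1
    have hmemC : y0 + lam • w ∈ C :=
      cone_add_mem hC hy0C (hC.2.2.1 w hw lam hlampos)
    have hfar : R < ‖y0 + lam • w‖ := by
      have h1 : lam * ‖w‖ ≥ R + ‖y0‖ + 1 := by
        rw [div_le_iff₀ hwn] at hlam1; linarith
      have h2 : ‖lam • w‖ - ‖y0‖ ≤ ‖y0 + lam • w‖ := by
        have h6 : ‖y0 + lam • w - y0‖ ≤ ‖y0 + lam • w‖ + ‖y0‖ := norm_sub_le _ _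
        rw [add_sub_cancel_left] at h6
        linarith
      rw [norm_smul, Real.norm_of_nonneg hlampos] at h2
      linarith
    have h3 := hnK _ (far_mem_K hRK hmemC hfar)
    rw [inner_add_right, real_inner_smul_right] at h3
    have h4 : ⟪n, p⟫ - ⟪n, y0⟫ + 1 ≤ lam * ⟪n, w⟫ := by
      rw [div_le_iff₀ hpos] at hlam2; linarith
    linarith
  have hstrict : ∀ w ∈ C, w ≠ 0 → ⟪n, w⟫ < 0 := by
    intro w hw hw0
    rcases (hpolar w hw).lt_or_eq with h | h
    · exact h
    exfalso
    have hwn : 0 < ‖w‖ := norm_pos_iff.2 hw0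
    have hnp : ⟪n, p⟫ < 0 := by
      obtain ⟨ε, hε, hball⟩ := Metric.isOpen_iff.1 isOpen_interior p hpi
      have hmem : p + (ε / 2) • n ∈ C := interior_subset (hball (by
        rw [Metric.mem_ball, dist_eq_norm, add_sub_cancel_left, norm_smul,
          Real.norm_of_nonneg (by linarith), hnnorm, mul_one]
        linarith))
      have h2 := hpolar _ hmem
      rw [inner_add_right, real_inner_smul_right, real_inner_self_eq_norm_mul_norm,
        hnnorm] at h2
      nlinarith
    set lam : ℝ := (R + 1) / ‖w‖ with hlam
    have hlampos : 0 < lam := by positivity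
    have hmemC : lam • w ∈ C := hC.2.2.1 w hw lam hlampos.le
    have hfar : R < ‖lam • w‖ := by
      rw [norm_smul, Real.norm_of_nonneg hlampos.le, hlam, div_mul_cancel₀ _ hwn.ne']
      linarith
    have h3 := hnK _ (far_mem_K hRK hmemC hfar)
    rw [real_inner_smul_right, h, mul_zero] at h3
    linarith
  have hintpolar : n ∈ interior (polarCone C) := by
    have hcpt : IsCompact (C ∩ Metric.sphere 0 1) := (isCompact_sphere 0 1).inter_left hC.1
    have heS : e ∈ C ∩ Metric.sphere 0 1 :=
      ⟨interior_subset heC, by rwa [Metric.mem_sphere, dist_zero_right]⟩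
    obtain ⟨w0, hw0mem, hmax0⟩ := hcpt.exists_isMaxOn
      (f := fun w : EuclideanSpace ℝ (Fin d) => ⟪n, w⟫) ⟨e, heS⟩
      ((continuous_const.inner continuous_id).continuousOn)
    have hw0n : ‖w0‖ = 1 := by
      have := hw0mem.2; rwa [Metric.mem_sphere, dist_zero_right] at this
    have hw00 : w0 ≠ 0 := by
      intro hh; rw [hh, norm_zero] at hw0n; norm_num at hw0n
    have hγ : ⟪n, w0⟫ < 0 := hstrict w0 hw0mem.1 hw00
    refine mem_interior.2 ⟨Metric.ball n (-⟪n, w0⟫), ?_, Metric.isOpen_ball,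
      Metric.mem_ball_self (by linarith)⟩
    intro n2 hn2
    intro w hw
    rcases eq_or_ne w 0 with rfl | hwne
    · rw [inner_zero_right]
    have hwn : 0 < ‖w‖ := norm_pos_iff.2 hwne
    have hw1 : ‖w‖⁻¹ • w ∈ C ∩ Metric.sphere 0 1 := by
      refine ⟨hC.2.2.1 w hw _ (by positivity), ?_⟩
      rw [Metric.mem_sphere, dist_zero_right, norm_smul, norm_inv, norm_norm,
        inv_mul_cancel₀ hwn.ne']
    have hmax1 : ⟪n, ‖w‖⁻¹ • w⟫ ≤ ⟪n, w0⟫ := hmax0 hw1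
    have hdiff : ⟪n2 - n, ‖w‖⁻¹ • w⟫ ≤ ‖n2 - n‖ := by
      have h5 := real_inner_le_norm (n2 - n) (‖w‖⁻¹ • w)
      have h6 : ‖‖w‖⁻¹ • w‖ = 1 := by
        rw [norm_smul, norm_inv, norm_norm, inv_mul_cancel₀ hwn.ne']
      rw [h6, mul_one] at h5
      exact h5
    have hball2 : ‖n2 - n‖ < -⟪n, w0⟫ := by
      have := Metric.mem_ball.1 hn2
      rwa [dist_eq_norm] at this
    have h7 : ⟪n2, ‖w‖⁻¹ • w⟫ < 0 := by
      have h8 : ⟪n2, ‖w‖⁻¹ • w⟫ = ⟪n, ‖w‖⁻¹ • w⟫ + ⟪n2 - n, ‖w‖⁻¹ • w⟫ := by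
        rw [← inner_add_left]; ring_nf
        congr 1
        abel
      rw [h8]
      linarith
    have h9 : ⟪n2, w⟫ = ‖w‖ * ⟪n2, ‖w‖⁻¹ • w⟫ := by
      rw [real_inner_smul_right, ← mul_assoc, mul_inv_cancel₀ hwn.ne', one_mul]
    rw [h9]
    exact mul_nonpos_of_nonneg_of_nonpos hwn.le h7.le
  exact ⟨n, ⟨by rwa [Metric.mem_sphere, dist_zero_right], hintpolar⟩, hnK⟩

private lemma proj_contract {e : EuclideanSpace ℝ (Fin d)} (he : ‖e‖ = 1)
    (v : EuclideanSpace ℝ (Fin d)) : ‖v - ⟪e, v⟫ • e‖ ≤ ‖v‖ := by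
  have hsq : ‖v - ⟪e, v⟫ • e‖ ^ 2 = ‖v‖ ^ 2 - ⟪e, v⟫ ^ 2 := by
    rw [norm_sub_sq_real]
    rw [real_inner_smul_right, norm_smul, Real.norm_eq_abs]
    rw [he, mul_one, real_inner_comm v e]
    ring_nf
    rw [sq_abs]
    ring
  have h1 : ‖v - ⟪e, v⟫ • e‖ ^ 2 ≤ ‖v‖ ^ 2 := by
    rw [hsq]; nlinarith [sq_nonneg (⟪e, v⟫)]
  have h2 := Real.sqrt_le_sqrt h1
  rwa [Real.sqrt_sq (norm_nonneg _), Real.sqrt_sq (norm_nonneg _)] at h2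

/-- Key quantitative estimate: if `K ⊆ {⟪u,·⟫ ≤ -t}` for a unit `u` making uniformly negative
angle with the cone, then `frontier K ∩ interior C` has substantial `H^{d-1}`-measure. -/
private lemma area_lower_bound (hd2 : 2 ≤ d) {C K : Set (EuclideanSpace ℝ (Fin d))}
    (hC : IsPCCCone C) (hK : CFull C K)
    {e : EuclideanSpace ℝ (Fin d)} (he : ‖e‖ = 1) (heC : e ∈ interior C)
    {r0 : ℝ} (hr0 : 0 < r0) (hcb : Metric.closedBall e r0 ⊆ C)
    {δ : ℝ} (hδ : 0 < δ) {u : EuclideanSpace ℝ (Fin d)} (hu : ‖u‖ = 1)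
    (hue : ⟪u, e⟫ ≤ -δ) {t : ℝ} (ht : 0 < t) (hsub : ∀ y ∈ K, ⟪u, y⟫ ≤ -t) :
    ENNReal.ofReal (t * r0 / 2) ^ ((d : ℝ) - 1) * diskKonst d ≤
      ENNReal.ofReal (1 + 1/δ) ^ ((d : ℝ) - 1) *
        μH[(d : ℝ) - 1] (frontier K ∩ interior C) := by
  have hm0 : (0 : ℝ) ≤ (d : ℝ) - 1 := by
    have : (2 : ℝ) ≤ (d : ℝ) := by exact_mod_cast hd2
    linarith
  obtain ⟨R0, hR0⟩ := hK.2.2.2.2.subset_closedBall 0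
  set R := max R0 0 with hR
  have hRK : C \ K ⊆ Metric.closedBall 0 R :=
    hR0.trans (Metric.closedBall_subset_closedBall (le_max_left _ _))
  have hRpos : 0 ≤ R := le_max_right _ _
  set ce : ℝ := -⟪u, e⟫ with hce
  have hceδ : δ ≤ ce := by rw [hce]; linarith
  have hcepos : 0 < ce := lt_of_lt_of_le hδ hceδ
  have hce1 : ce ≤ 1 := by
    have := abs_real_inner_le_norm u e
    rw [hu, he, mul_one] at this
    rw [hce]
    have := abs_le.1 this
    linarith [this.1]
  set μ : ℝ := t / (2 * ce) with hμ
  have hμpos : 0 < μ := by positivity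
  have hμge : t / 2 ≤ μ := by
    rw [hμ]
    apply div_le_div_of_nonneg_left ht.le (by linarith) ?_
    · linarith
  set q := μ • e with hq
  have hqu : ⟪u, q⟫ = -t/2 := by
    rw [hq, real_inner_smul_right, hμ]
    have hue' : ⟪u, e⟫ = -ce := by rw [hce]; ring
    rw [hue']
    field_simp
  set ρ := μ * r0 with hρ
  have hρpos : 0 < ρ := by positivity
  have hρge : t * r0 / 2 ≤ ρ := by
    rw [hρ]
    calc t * r0 / 2 = (t/2) * r0 := by ring
      _ ≤ μ * r0 := mul_le_mul_of_nonneg_right hμge hr0.le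
  set A := eucDisk u q ρ with hA
  -- A sits inside C and outside K
  have hAC : ∀ z ∈ A, z ∈ C := by
    intro z hz
    have h1 : μ⁻¹ • z ∈ Metric.closedBall e r0 := by
      rw [Metric.mem_closedBall, dist_eq_norm]
      have heq : μ⁻¹ • z - e = μ⁻¹ • (z - q) := by
        rw [smul_sub, hq, smul_smul, inv_mul_cancel₀ hμpos.ne', one_smul]
      rw [heq, norm_smul, norm_inv, Real.norm_of_nonneg hμpos.le]
      rw [inv_mul_le_iff₀ hμpos]
      calc ‖z - q‖ ≤ ρ := hz.2
        _ = μ * r0 := rfl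
        _ ≤ μ * r0 := le_refl _
    have h2 := hcb h1
    have heq2 : z = μ • (μ⁻¹ • z) := by
      rw [smul_smul, mul_inv_cancel₀ hμpos.ne', one_smul]
    rw [heq2]
    exact hC.2.2.1 _ h2 μ hμpos.le
  have hAu : ∀ z ∈ A, ⟪u, z⟫ = -t/2 := by
    intro z hz
    have h1 : ⟪u, z - q⟫ = 0 := hz.1
    rw [inner_sub_right] at h1
    have : ⟪u, z⟫ = ⟪u, q⟫ := by linarith
    rw [this, hqu]
  have hAnK : ∀ z ∈ A, z ∉ K := by
    intro z hz hzK
    have := hsub z hzK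
    rw [hAu z hz] at this
    linarith
  -- projection along e
  set π : EuclideanSpace ℝ (Fin d) → EuclideanSpace ℝ (Fin d) :=
    fun y => y - ⟪e, y⟫ • e with hπ
  have hπlip : LipschitzWith 1 π := by
    apply LipschitzWith.of_dist_le_mul
    intro x y
    rw [NNReal.coe_one, one_mul, dist_eq_norm, dist_eq_norm]
    have heq : π x - π y = (x - y) - ⟪e, x - y⟫ • e := by
      simp only [hπ, inner_sub_right, sub_smul]
      abel
    rw [heq]
    exact proj_contract he _
  -- inverse of π on the hyperplane
  set g : EuclideanSpace ℝ (Fin d) → EuclideanSpace ℝ (Fin d) :=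
    fun w => w + (((-t/2) - ⟪u, w⟫) / ⟪u, e⟫) • e with hg
  have hglip : LipschitzWith (Real.toNNReal (1 + 1/δ)) g := by
    apply LipschitzWith.of_dist_le_mul
    intro x y
    rw [Real.coe_toNNReal _ (by positivity), dist_eq_norm, dist_eq_norm]
    have heq : g x - g y = (x - y) + ((⟪u, y⟫ - ⟪u, x⟫) / ⟪u, e⟫) • e := by
      simp only [hg]
      have h' : (-t/2 - ⟪u, x⟫) / ⟪u, e⟫ - (-t/2 - ⟪u, y⟫) / ⟪u, e⟫ =
          (⟪u, y⟫ - ⟪u, x⟫) / ⟪u, e⟫ := by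
        rw [div_sub_div_same]; ring_nf
      rw [← h', sub_smul]
      abel
    rw [heq]
    have h1 : ‖(x - y) + ((⟪u, y⟫ - ⟪u, x⟫) / ⟪u, e⟫) • e‖ ≤
        ‖x - y‖ + |(⟪u, y⟫ - ⟪u, x⟫) / ⟪u, e⟫| := by
      refine (norm_add_le _ _).trans ?_
      rw [norm_smul, he, mul_one, Real.norm_eq_abs]
    refine h1.trans ?_
    have h2 : |⟪u, e⟫| = ce := by
      rw [hce]; rw [abs_of_neg (by linarith : ⟪u, e⟫ < 0)]
    have h3 : |⟪u, y⟫ - ⟪u, x⟫| ≤ ‖x - y‖ := by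
      have h4 : ⟪u, y⟫ - ⟪u, x⟫ = ⟪u, y - x⟫ := by rw [inner_sub_right]
      rw [h4]
      have h5 := abs_real_inner_le_norm u (y - x)
      rw [hu, one_mul, norm_sub_rev] at h5
      exact h5
    rw [abs_div, h2]
    have h6 : |⟪u, y⟫ - ⟪u, x⟫| / ce ≤ ‖x - y‖ / δ :=
      div_le_div₀ (norm_nonneg _) h3 hδ hceδ
    calc ‖x - y‖ + |⟪u, y⟫ - ⟪u, x⟫| / ce ≤ ‖x - y‖ + ‖x - y‖ / δ := by linarith
      _ = (1 + 1/δ) * ‖x - y‖ := by ring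
  -- g inverts π on the hyperplane containing A
  have hginv : ∀ a ∈ A, g (π a) = a := by
    intro a ha
    have hau : ⟪u, a⟫ = -t/2 := hAu a ha
    simp only [hg, hπ]
    have h1 : ⟪u, a - ⟪e, a⟫ • e⟫ = -t/2 - ⟪e, a⟫ * ⟪u, e⟫ := by
      rw [inner_sub_right, real_inner_smul_right, hau]
    rw [h1]
    have hue0 : ⟪u, e⟫ ≠ 0 := by
      intro h; rw [h] at hue; linarith
    have h2 : (-t/2 - (-t/2 - ⟪e, a⟫ * ⟪u, e⟫)) / ⟪u, e⟫ = ⟪e, a⟫ := by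
      set α := ⟪e, a⟫ with hα
      set β := ⟪u, e⟫ with hβ
      field_simp
      ring
    rw [h2]
    abel
  -- ray shooting: each z ∈ A projects to a frontier point inside interior C
  set S := frontier K ∩ interior C with hS
  have hshoot : ∀ z ∈ A, ∃ p ∈ S, π p = π z := by
    intro z hz
    have hzC : z ∈ C := hAC z hz
    have hzK : z ∉ K := hAnK z hz
    set T : ℝ := R + ‖z‖ + 1 with hT
    have hTpos : 0 < T := by positivity
    set w : EuclideanSpace ℝ (Fin d) := z + T • e with hw
    have hwC : w ∈ C := cone_add_mem hC hzC (hC.2.2.1 e (interior_subset heC) T hTpos.le)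
    have hwK : w ∈ K := by
      refine far_mem_K hRK hwC ?_
      have h6 : ‖z + T • e - z‖ ≤ ‖z + T • e‖ + ‖z‖ := norm_sub_le _ _
      rw [add_sub_cancel_left, norm_smul, Real.norm_of_nonneg hTpos.le, he, mul_one] at h6
      rw [hw]
      linarith
    obtain ⟨θ, hθpos, hθ1, hθfr, _⟩ := first_entry hK.2.1 hzK hwK
    have hwz : w - z = T • e := by rw [hw]; abel
    set p := z + θ • (w - z) with hp
    have hpe : p = z + (θ * T) • e := by rw [hp, hwz, smul_smul]
    have hpS : p ∈ S := by
      refine ⟨hθfr, ?_⟩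
      rw [hpe]
      exact cone_add_interior hC hzC (cone_smul_interior hC (mul_pos hθpos hTpos) heC)
    refine ⟨p, hpS, ?_⟩
    simp only [hπ, hpe]
    have h7 : ⟪e, z + (θ * T) • e⟫ = ⟪e, z⟫ + (θ * T) := by
      rw [inner_add_right, real_inner_smul_right, real_inner_self_eq_norm_mul_norm, he]
      ring
    rw [h7, add_smul]
    abel
  -- measure comparison chain
  have hAg : A ⊆ g '' (π '' S) := by
    intro a ha
    obtain ⟨p, hpS, hpπ⟩ := hshoot a ha
    exact ⟨π a, ⟨p, hpS, hpπ⟩, hginv a ha⟩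
  have hchain1 : μH[(d : ℝ) - 1] A ≤
      ENNReal.ofReal (1 + 1/δ) ^ ((d : ℝ) - 1) * μH[(d : ℝ) - 1] (π '' S) := by
    refine le_trans (measure_mono hAg) ?_
    have := hglip.hausdorffMeasure_image_le hm0 (π '' S)
    convert this using 3
    all_goals rfl
  have hchain2 : μH[(d : ℝ) - 1] (π '' S) ≤ μH[(d : ℝ) - 1] S := by
    have := hπlip.hausdorffMeasure_image_le hm0 S
    rwa [ENNReal.coe_one, ENNReal.one_rpow, one_mul] at this
  have hdisk := eucDisk_meas_ge hd2 hu q hρpos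
  calc ENNReal.ofReal (t * r0 / 2) ^ ((d : ℝ) - 1) * diskKonst d
      ≤ ENNReal.ofReal ρ ^ ((d : ℝ) - 1) * diskKonst d := by
        exact mul_le_mul_left (ENNReal.rpow_le_rpow (ENNReal.ofReal_le_ofReal hρge) hm0) _
    _ ≤ μH[(d : ℝ) - 1] A := hdisk
    _ ≤ ENNReal.ofReal (1 + 1/δ) ^ ((d : ℝ) - 1) * μH[(d : ℝ) - 1] (π '' S) := hchain1
    _ ≤ ENNReal.ofReal (1 + 1/δ) ^ ((d : ℝ) - 1) * μH[(d : ℝ) - 1] S :=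
        mul_le_mul_right hchain2 _

set_option maxHeartbeats 1000000 in
/-- Local positivity: near any frontier point of a closed convex set containing a ball,
the boundary has positive `H^{d-1}`-measure. -/
private lemma frontier_meas_pos (hd2 : 2 ≤ d) {K : Set (EuclideanSpace ℝ (Fin d))}
    (hKcl : IsClosed K) (hKcv : Convex ℝ K) {y0 : EuclideanSpace ℝ (Fin d)} {r : ℝ}
    (hr : 0 < r) (hcb : Metric.closedBall y0 r ⊆ K)
    {x : EuclideanSpace ℝ (Fin d)} (hx : x ∈ frontier K) {ε : ℝ} (hε : 0 < ε)
    (hεr : ε ≤ r / 2) :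
    0 < μH[(d : ℝ) - 1] (frontier K ∩ Metric.ball x ε) := by
  have hm0 : (0 : ℝ) ≤ (d : ℝ) - 1 := by
    have : (2 : ℝ) ≤ (d : ℝ) := by exact_mod_cast hd2
    linarith
  have hy0K : y0 ∈ K := hcb (Metric.mem_closedBall_self hr.le)
  have hint : y0 ∈ interior K :=
    interior_maximal (Metric.ball_subset_closedBall.trans hcb) Metric.isOpen_ball
      (Metric.mem_ball_self hr)
  have hxK : x ∈ K := by have := hx.1; rwa [hKcl.closure_eq] at this
  obtain ⟨n, hn, hnK⟩ := support_at_frontier hKcl hKcv hint hx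
  set β : ℝ := ⟪n, x⟫ with hβ
  set R : ℝ := ‖y0 - x‖ with hRdef
  have hRr : r ≤ R := by
    by_contra hlt
    push_neg at hlt
    have hmem : x ∈ Metric.ball y0 r := by
      rw [Metric.mem_ball, dist_eq_norm, norm_sub_rev]; exact hlt
    exact hx.2 (interior_maximal (Metric.ball_subset_closedBall.trans hcb)
      Metric.isOpen_ball hmem)
  have hRpos : 0 < R := lt_of_lt_of_le hr hRr
  have hy0β : ⟪n, y0⟫ ≤ β - r := by
    have hmem : y0 + r • n ∈ K := hcb (by
      rw [Metric.mem_closedBall, dist_eq_norm, add_sub_cancel_left, norm_smul,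
        Real.norm_of_nonneg hr.le, hn, mul_one])
    have h1 := hnK _ hmem
    rw [inner_add_right, real_inner_smul_right, real_inner_self_eq_norm_mul_norm, hn] at h1
    rw [hβ]
    nlinarith
  have hβy0R : β - ⟪n, y0⟫ ≤ R := by
    have h1 : ⟪n, x - y0⟫ ≤ ‖x - y0‖ := by
      have h2 := real_inner_le_norm n (x - y0); rwa [hn, one_mul] at h2
    rw [inner_sub_right] at h1
    rw [hRdef, norm_sub_rev]
    linarith
  set s : ℝ := min r (ε * r / (4 * (R + 3 * r))) with hs
  have hspos : 0 < s := lt_min hr (by positivity)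
  have hsr : s ≤ r := min_le_left _ _
  have hsε : s * (4 * (R + 3 * r)) ≤ ε * r := by
    have h1 : s ≤ ε * r / (4 * (R + 3 * r)) := min_le_right _ _
    rw [le_div_iff₀ (by positivity)] at h1
    linarith
  set c0 : ℝ := β + s - ⟪n, y0⟫ with hc0
  have hc0low : r ≤ c0 := by rw [hc0]; nlinarith
  have hc0up : c0 ≤ R + r := by rw [hc0]; nlinarith
  have hc0pos : 0 < c0 := lt_of_lt_of_le hr hc0low
  set θ0 : ℝ := 2 * s / (r + 2 * s) with hθ0
  have hθ0pos : 0 < θ0 := by positivity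
  have hθ0lt1 : θ0 < 1 := by rw [hθ0, div_lt_one (by positivity)]; linarith
  have hθ0le : θ0 ≤ 2 * s / r := by
    rw [hθ0]
    apply div_le_div_of_nonneg_left (by positivity) hr
    linarith
  set F : EuclideanSpace ℝ (Fin d) → EuclideanSpace ℝ (Fin d) :=
    fun z => y0 + (c0 / ⟪n, z - y0⟫) • (z - y0) with hF
  -- each point of the shifted disk is the F-image of a nearby frontier point
  have hkey : ∀ a ∈ eucDisk n (x + s • n) s,
      ∃ p ∈ frontier K ∩ Metric.ball x ε, F p = a := by
    intro a ha
    obtain ⟨hav, han⟩ := ha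
    set v : EuclideanSpace ℝ (Fin d) := a - (x + s • n) with hv
    have hav2 : a = x + (s • n + v) := by rw [hv]; abel
    have hnv : ⟪n, v⟫ = 0 := hav
    have hna : ⟪n, a⟫ = β + s := by
      rw [hav2, inner_add_right, inner_add_right, real_inner_smul_right,
        real_inner_self_eq_norm_mul_norm, hn, hnv, hβ]
      ring
    have hanotK : a ∉ K := by
      intro haK
      have h1 := hnK _ haK
      rw [hna] at h1
      linarith
    have hw2s : ‖s • n + v‖ ≤ 2 * s := by
      refine (norm_add_le _ _).trans ?_
      rw [norm_smul, Real.norm_of_nonneg hspos.le, hn, mul_one]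
      linarith
    obtain ⟨θ, hθpos, hθ1, hθfr, hθmin⟩ := first_entry hKcl hanotK hy0K
    set p := a + θ • (y0 - a) with hp
    have hθθ0 : θ ≤ θ0 := by
      by_contra hgt
      push_neg at hgt
      refine hθmin θ0 hθ0pos.le hgt ?_
      -- the point at parameter θ0 lies in K
      have h1m : (1 : ℝ) - θ0 = r / (r + 2 * s) := by
        rw [hθ0]; field_simp; ring
      have hco : (1 - θ0) / θ0 = r / (2 * s) := by
        rw [h1m, hθ0]
        rw [div_div_div_cancel_right₀]
        positivity
      have hcopos : 0 ≤ (1 - θ0) / θ0 := by rw [hco]; positivity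
      have hball : y0 + ((1 - θ0) / θ0) • (s • n + v) ∈ K := by
        apply hcb
        rw [Metric.mem_closedBall, dist_eq_norm, add_sub_cancel_left, norm_smul,
          Real.norm_of_nonneg hcopos, hco]
        calc r / (2 * s) * ‖s • n + v‖ ≤ r / (2 * s) * (2 * s) :=
              mul_le_mul_of_nonneg_left hw2s (by positivity)
          _ = r := div_mul_cancel₀ _ (by positivity : (2 * s) ≠ 0)
      have hzeta : a + θ0 • (y0 - a) =
          (1 - θ0) • x + θ0 • (y0 + ((1 - θ0) / θ0) • (s • n + v)) := by
        have hsc : θ0 • (((1 - θ0) / θ0) • (s • n + v)) = (1 - θ0) • (s • n + v) := by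
          rw [smul_smul, mul_div_cancel₀ _ hθ0pos.ne']
        rw [smul_add, hsc, hav2]
        module
      rw [hzeta]
      exact hKcv hxK hball (by linarith) hθ0pos.le (by ring)
    have hθlt1 : θ < 1 := lt_of_le_of_lt hθθ0 hθ0lt1
    have hax : ‖a - x‖ ≤ 2 * s := by
      rw [hav2, add_sub_cancel_left]; exact hw2s
    have hya : ‖y0 - a‖ ≤ R + 2 * s := by
      have h1 : y0 - a = (y0 - x) - (s • n + v) := by rw [hav2]; abel
      rw [h1]
      refine (norm_sub_le _ _).trans ?_
      rw [← hRdef]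
      linarith
    have hpball : p ∈ Metric.ball x ε := by
      rw [Metric.mem_ball, dist_eq_norm]
      have h1 : p - x = (a - x) + θ • (y0 - a) := by rw [hp]; abel
      have h2 : ‖p - x‖ ≤ 2 * s + θ * (R + 2 * s) := by
        rw [h1]
        refine (norm_add_le _ _).trans ?_
        rw [norm_smul, Real.norm_of_nonneg hθpos.le]
        have := mul_le_mul_of_nonneg_left hya hθpos.le
        linarith
      have h3 : θ * (R + 2 * s) ≤ (2 * s / r) * (R + 2 * s) :=
        mul_le_mul_of_nonneg_right (hθθ0.trans hθ0le) (by positivity)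
      have h4 : 2 * s + (2 * s / r) * (R + 2 * s) < ε := by
        rw [div_mul_eq_mul_div, ← sub_pos]
        have h5 : ε - (2 * s + 2 * s * (R + 2 * s) / r) =
            (ε * r - (2 * s * r + 2 * s * (R + 2 * s))) / r := by
          field_simp
        rw [h5]
        apply div_pos ?_ hr
        nlinarith [mul_pos hε hr, mul_le_mul_of_nonneg_left hsr
          (by positivity : (0:ℝ) ≤ 2 * s)]
      linarith
    have hna0 : ⟪n, a - y0⟫ = c0 := by
      rw [inner_sub_right, hna, hc0]
    have hpy0 : p - y0 = (1 - θ) • (a - y0) := by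
      rw [hp]
      module
    refine ⟨p, ⟨hθfr, hpball⟩, ?_⟩
    simp only [hF]
    rw [hpy0, real_inner_smul_right, hna0, smul_smul]
    have hne1 : (1 : ℝ) - θ ≠ 0 := by
      intro hcontra
      have : θ = 1 := by linarith
      rw [this] at hθlt1
      exact lt_irrefl _ hθlt1
    have h6 : c0 / ((1 - θ) * c0) * (1 - θ) = 1 := by
      rw [div_mul_eq_mul_div, mul_comm ((1:ℝ) - θ) c0, div_self (mul_ne_zero hc0pos.ne' hne1)]
    rw [h6, one_smul]
    abel
  -- F is Lipschitz on the relevant region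
  set T : Set (EuclideanSpace ℝ (Fin d)) :=
    {z | r / 2 ≤ ⟪n, z - y0⟫ ∧ ‖z - y0‖ ≤ R + r} with hT
  have hTsub : frontier K ∩ Metric.ball x ε ⊆ T := by
    intro z hz
    have hzx : ‖z - x‖ < ε := by
      have := hz.2; rwa [Metric.mem_ball, dist_eq_norm] at this
    have habs : |⟪n, z - x⟫| ≤ ‖z - x‖ := by
      have h1 := abs_real_inner_le_norm n (z - x)
      rwa [hn, one_mul] at h1
    constructor
    · have h2 : ⟪n, z - y0⟫ = ⟪n, z - x⟫ + (β - ⟪n, y0⟫) := by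
        rw [inner_sub_right, inner_sub_right, hβ]; ring
      rw [h2]
      have h3 := (abs_le.1 habs).1
      linarith
    · have h1 : z - y0 = (z - x) + (x - y0) := by abel
      rw [h1]
      refine (norm_add_le _ _).trans ?_
      rw [norm_sub_rev x y0, ← hRdef]
      linarith
  set L : ℝ := (R + r) * (2 / r) + (R + r) ^ 2 * (4 / r ^ 2) with hL
  have hFlip : LipschitzOnWith (Real.toNNReal L) F T := by
    apply LipschitzOnWith.of_dist_le_mul
    intro z hz z' hz'
    rw [Real.coe_toNNReal _ (by positivity), dist_eq_norm, dist_eq_norm]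
    set g1 : ℝ := ⟪n, z - y0⟫ with hg1
    set g2 : ℝ := ⟪n, z' - y0⟫ with hg2
    have hg1pos : r / 2 ≤ g1 := hz.1
    have hg2pos : r / 2 ≤ g2 := hz'.1
    have hg1p : 0 < g1 := lt_of_lt_of_le (by positivity) hg1pos
    have hg2p : 0 < g2 := lt_of_lt_of_le (by positivity) hg2pos
    have hdiffF : F z - F z' = (c0 / g1) • (z - z') + (c0 / g1 - c0 / g2) • (z' - y0) := by
      simp only [hF]
      rw [← hg1, ← hg2]
      module
    have hg21 : g2 - g1 = ⟪n, z' - z⟫ := by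
      rw [hg1, hg2, inner_sub_right, inner_sub_right, inner_sub_right]; ring
    have habs21 : |g2 - g1| ≤ ‖z - z'‖ := by
      rw [hg21]
      have h1 := abs_real_inner_le_norm n (z' - z)
      rwa [hn, one_mul, norm_sub_rev] at h1
    have hquot : c0 / g1 - c0 / g2 = c0 * (g2 - g1) / (g1 * g2) := by
      field_simp
    have habsquot : |c0 / g1 - c0 / g2| ≤ (R + r) * (4 / r ^ 2) * ‖z - z'‖ := by
      rw [hquot, abs_div, abs_mul, abs_of_pos hc0pos, abs_of_pos (mul_pos hg1p hg2p)]
      have h1 : c0 * |g2 - g1| ≤ (R + r) * ‖z - z'‖ := by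
        have := mul_le_mul hc0up habs21 (abs_nonneg _) (by positivity)
        linarith
      have h2 : r ^ 2 / 4 ≤ g1 * g2 := by nlinarith
      calc c0 * |g2 - g1| / (g1 * g2) ≤ (R + r) * ‖z - z'‖ / (r ^ 2 / 4) :=
            div_le_div₀ (by positivity) h1 (by positivity) h2
        _ = (R + r) * (4 / r ^ 2) * ‖z - z'‖ := by
            rw [div_div_eq_mul_div]
            ring
    have hfirst : ‖(c0 / g1) • (z - z')‖ ≤ (R + r) * (2 / r) * ‖z - z'‖ := by
      rw [norm_smul, Real.norm_of_nonneg (by positivity)]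
      have h1 : c0 / g1 ≤ (R + r) / (r / 2) := div_le_div₀ (by positivity) hc0up (by positivity) hg1pos
      have h2 : (R + r) / (r / 2) = (R + r) * (2 / r) := by
        rw [div_div_eq_mul_div]
        ring
      rw [h2] at h1
      exact mul_le_mul_of_nonneg_right h1 (norm_nonneg _)
    rw [hdiffF]
    refine (norm_add_le _ _).trans ?_
    have hsecond : ‖(c0 / g1 - c0 / g2) • (z' - y0)‖ ≤
        (R + r) ^ 2 * (4 / r ^ 2) * ‖z - z'‖ := by
      rw [norm_smul, Real.norm_eq_abs]
      calc |c0 / g1 - c0 / g2| * ‖z' - y0‖ ≤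
          ((R + r) * (4 / r ^ 2) * ‖z - z'‖) * (R + r) := by
            apply mul_le_mul habsquot hz'.2 (norm_nonneg _) (by positivity)
        _ = (R + r) ^ 2 * (4 / r ^ 2) * ‖z - z'‖ := by ring
    calc ‖(c0 / g1) • (z - z')‖ + ‖(c0 / g1 - c0 / g2) • (z' - y0)‖
        ≤ (R + r) * (2 / r) * ‖z - z'‖ + (R + r) ^ 2 * (4 / r ^ 2) * ‖z - z'‖ :=
          add_le_add hfirst hsecond
      _ = L * ‖z - z'‖ := by rw [hL]; ring
  -- measure comparison
  have hAsub : eucDisk n (x + s • n) s ⊆ F '' (frontier K ∩ Metric.ball x ε) := by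
    intro a ha
    obtain ⟨p, hp1, hp2⟩ := hkey a ha
    exact ⟨p, hp1, hp2⟩
  have him := (hFlip.mono hTsub).hausdorffMeasure_image_le hm0
  have hdisk := eucDisk_meas_ge hd2 hn (x + s • n) hspos
  have hpos : 0 < ENNReal.ofReal s ^ ((d : ℝ) - 1) * diskKonst d := by
    apply ENNReal.mul_pos
    · exact (ENNReal.rpow_pos_of_nonneg (ENNReal.ofReal_pos.2 hspos) hm0).ne'
    · exact (diskKonst_pos hd2).ne'
  by_contra hzero
  push_neg at hzero
  have hzero' : μH[(d : ℝ) - 1] (frontier K ∩ Metric.ball x ε) = 0 := le_antisymm hzero zero_le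
  have hchain : ENNReal.ofReal s ^ ((d : ℝ) - 1) * diskKonst d ≤ 0 := by
    calc ENNReal.ofReal s ^ ((d : ℝ) - 1) * diskKonst d
        ≤ μH[(d : ℝ) - 1] (eucDisk n (x + s • n) s) := hdisk
      _ ≤ μH[(d : ℝ) - 1] (F '' (frontier K ∩ Metric.ball x ε)) := measure_mono hAsub
      _ ≤ (Real.toNNReal L : ℝ≥0∞) ^ ((d : ℝ) - 1) *
          μH[(d : ℝ) - 1] (frontier K ∩ Metric.ball x ε) := him
      _ = 0 := by rw [hzero', mul_zero]
  exact absurd (le_antisymm hchain zero_le) hpos.ne'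

end AuxProof

/-- **From the proof of Theorem 1.2.** For `C`-full sets with surface area measure concentrated
on a compact `ω ⊆ Ω_C` and total measure at most `b`, the boundary points in `int C` (and the
points where the support function is attained for some `u ∈ ω`) lie in a ball of radius `c`
depending only on `C, ω, b`. -/
theorem boundary_points_bounded (d : ℕ) (hd : 2 ≤ d)
    (C : Set (EuclideanSpace ℝ (Fin d))) (hC : IsPCCCone C)
    (ω : Set (EuclideanSpace ℝ (Fin d))) (hωne : ω.Nonempty) (hωcpt : IsCompact ω)
    (hωsub : ω ⊆ omegaC C) (b : ℝ) (hb : 0 < b) :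
    ∃ c : ℝ, ∀ K : Set (EuclideanSpace ℝ (Fin d)), CFull C K →
      surfMeas K (omegaC C \ ω) = 0 → surfMeas K (omegaC C) ≤ ENNReal.ofReal b →
      (∀ x ∈ frontier K ∩ interior C, ‖x‖ ≤ c) ∧
      (∀ x ∈ K, ∀ u ∈ ω, suppFn K u = ⟪u, x⟫ → ‖x‖ ≤ c) := by
  classical
  obtain ⟨e, he, heC⟩ := exists_unit_interior hd hC
  obtain ⟨ε0, hε0, hballC⟩ := Metric.isOpen_iff.1 isOpen_interior e heC
  set r0 : ℝ := ε0 / 2 with hr0def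
  have hr0pos : 0 < r0 := by positivity
  have hcb : Metric.closedBall e r0 ⊆ C := by
    intro w hw
    apply interior_subset (hballC _)
    rw [Metric.mem_closedBall] at hw
    rw [Metric.mem_ball]
    rw [hr0def] at hw
    linarith
  obtain ⟨δ, hδpos, hδ1, hδ⟩ := exists_delta hC hωne hωcpt hωsub he (interior_subset heC)
  have hm0 : (0 : ℝ) ≤ (d : ℝ) - 1 := by
    have : (2 : ℝ) ≤ (d : ℝ) := by exact_mod_cast hd
    linarith
  have hmpos : (0 : ℝ) < (d : ℝ) - 1 := by
    have : (2 : ℝ) ≤ (d : ℝ) := by exact_mod_cast hd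
    linarith
  have hκpos := diskKonst_pos (d := d) hd
  have hκtop : diskKonst d ≠ ⊤ :=
    (lt_of_le_of_lt diskKonst_le_one ENNReal.one_lt_top).ne
  set N : ℝ≥0∞ := ENNReal.ofReal (1 + 1/δ) ^ ((d : ℝ) - 1) * ENNReal.ofReal b with hN
  have hNtop : N ≠ ⊤ := by
    apply ENNReal.mul_ne_top
    · exact ENNReal.rpow_ne_top_of_nonneg hm0 ENNReal.ofReal_ne_top
    · exact ENNReal.ofReal_ne_top
  set B : ℝ≥0∞ := (N / diskKonst d) ^ (1 / ((d : ℝ) - 1)) with hB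
  have hBtop : B ≠ ⊤ := by
    apply ENNReal.rpow_ne_top_of_nonneg (by positivity)
    exact (ENNReal.div_lt_top hNtop hκpos.ne').ne
  set c1 : ℝ := B.toReal with hc1
  have hc1nonneg : 0 ≤ c1 := ENNReal.toReal_nonneg
  set c : ℝ := 2 * c1 / (r0 * δ) with hc
  have hcnonneg : 0 ≤ c := by positivity
  -- the central estimate
  have hmain : ∀ K : Set (EuclideanSpace ℝ (Fin d)), CFull C K →
      surfMeas K (omegaC C) ≤ ENNReal.ofReal b →
      ∀ x ∈ K, ∀ u ∈ ω, (∀ y ∈ K, ⟪u, y⟫ ≤ ⟪u, x⟫) → ‖x‖ ≤ c := by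
    intro K hK hbound x hx u hu hsub
    rcases eq_or_ne x 0 with rfl | hx0
    · rw [norm_zero]; exact hcnonneg
    have hxnorm : 0 < ‖x‖ := norm_pos_iff.2 hx0
    set t : ℝ := δ * ‖x‖ with ht
    have htpos : 0 < t := by positivity
    have hunorm : ‖u‖ = 1 := by
      have := (hωsub hu).1
      rwa [Metric.mem_sphere, dist_zero_right] at this
    have hue : ⟪u, e⟫ ≤ -δ := by
      have h1 := hδ u hu e (interior_subset heC)
      rwa [he, mul_one] at h1
    have hsub' : ∀ y ∈ K, ⟪u, y⟫ ≤ -t := by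
      intro y hy
      have h1 := hδ u hu x (hK.2.2.2.1 hx)
      have h2 := hsub y hy
      rw [ht]
      linarith
    have harea := area_lower_bound hd hC hK he heC hr0pos hcb hδpos hunorm hue htpos hsub'
    have hfront : frontier K ∩ interior C ⊆ revSphImage K (omegaC C) := by
      intro p hp
      obtain ⟨n, hnΩ, hnK⟩ := normal_in_omegaC hd hC hK hp.1 hp.2
      exact ⟨hp.1, n, hnΩ, hnK⟩
    have hch : ENNReal.ofReal (t * r0 / 2) ^ ((d : ℝ) - 1) * diskKonst d ≤ N := by
      refine harea.trans ?_
      rw [hN]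
      refine mul_le_mul_right ?_ _
      exact (measure_mono hfront).trans hbound
    have h1 : ENNReal.ofReal (t * r0 / 2) ^ ((d : ℝ) - 1) ≤ N / diskKonst d :=
      (ENNReal.le_div_iff_mul_le (Or.inl hκpos.ne') (Or.inl hκtop)).2 hch
    have h2 := ENNReal.rpow_le_rpow h1 (by positivity : (0:ℝ) ≤ 1 / ((d : ℝ) - 1))
    rw [← ENNReal.rpow_mul, mul_one_div_cancel hmpos.ne', ENNReal.rpow_one] at h2
    rw [← hB] at h2
    have h3 : t * r0 / 2 ≤ c1 := by
      rw [hc1]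
      exact (ENNReal.ofReal_le_iff_le_toReal hBtop).1 h2
    rw [ht] at h3
    rw [hc, le_div_iff₀ (by positivity)]
    nlinarith
  refine ⟨c, ?_⟩
  intro K hK hnull hbound
  have hsupp : ∀ x ∈ K, ∀ u ∈ ω, suppFn K u = ⟪u, x⟫ → ‖x‖ ≤ c := by
    intro x hx u hu hsupp
    refine hmain K hK hbound x hx u hu ?_
    intro y hy
    have hbdd : BddAbove ((fun y => ⟪u, y⟫) '' K) := by
      refine ⟨0, ?_⟩
      rintro _ ⟨z, hz, rfl⟩
      exact interior_subset (hωsub hu).2 z (hK.2.2.2.1 hz)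
    have := le_csSup hbdd (Set.mem_image_of_mem _ hy)
    rwa [show sSup ((fun y => ⟪u, y⟫) '' K) = ⟪u, x⟫ from hsupp] at this
  refine ⟨?_, hsupp⟩
  intro x hx
  obtain ⟨hxf, hxi⟩ := hx
  refine le_of_forall_pos_le_add ?_
  intro η hη
  obtain ⟨ε1, hε1, hball1⟩ := Metric.isOpen_iff.1 isOpen_interior x hxi
  obtain ⟨y0, r, hr, hcbK⟩ := cfull_interior_ball hd hC hK
  set ε : ℝ := min (min ε1 η) (r / 2) with hε
  have hεpos : 0 < ε := lt_min (lt_min hε1 hη) (by positivity)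
  have hεr : ε ≤ r / 2 := min_le_right _ _
  have hεη : ε ≤ η := le_trans (min_le_left _ _) (min_le_right _ _)
  have hεε1 : ε ≤ ε1 := le_trans (min_le_left _ _) (min_le_left _ _)
  have hpos := frontier_meas_pos hd hK.2.1 hK.2.2.1 hr hcbK hxf hεpos hεr
  have hballint : Metric.ball x ε ⊆ interior C :=
    (Metric.ball_subset_ball hεε1).trans hball1
  have hcover : frontier K ∩ Metric.ball x ε ⊆
      (revSphImage K ω ∩ Metric.ball x ε) ∪ revSphImage K (omegaC C \ ω) := by
    intro z hz
    obtain ⟨n, hnΩ, hnK⟩ := normal_in_omegaC hd hC hK hz.1 (hballint hz.2)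
    by_cases hnω : n ∈ ω
    · exact Or.inl ⟨⟨hz.1, n, hnω, hnK⟩, hz.2⟩
    · exact Or.inr ⟨hz.1, n, ⟨hnΩ, hnω⟩, hnK⟩
  have hne : (revSphImage K ω ∩ Metric.ball x ε).Nonempty := by
    by_contra hemp
    rw [Set.not_nonempty_iff_eq_empty] at hemp
    rw [hemp, Set.empty_union] at hcover
    have h1 : μH[(d : ℝ) - 1] (frontier K ∩ Metric.ball x ε) = 0 :=
      le_antisymm (le_trans (measure_mono hcover) (le_of_eq hnull)) zero_le
    rw [h1] at hpos
    exact lt_irrefl _ hpos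
  obtain ⟨z, hzrev, hzball⟩ := hne
  obtain ⟨hzf, u', hu'ω, hu'K⟩ := hzrev
  have hzK : z ∈ K := by
    have := hzf.1
    rwa [hK.2.1.closure_eq] at this
  have hzc : ‖z‖ ≤ c := hmain K hK hbound z hzK u' hu'ω hu'K
  have hxz : ‖x - z‖ < ε := by
    have := hzball
    rw [Metric.mem_ball, dist_eq_norm, norm_sub_rev] at this
    exact this
  calc ‖x‖ = ‖z + (x - z)‖ := by rw [add_sub_cancel]
    _ ≤ ‖z‖ + ‖x - z‖ := norm_add_le _ _
    _ ≤ c + η := by linarith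
end
end
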